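/- arXiv:1812.10880 — 5 statements merged into one kernel-verified Lean document; each statement's English description precedes it below -/
import Mathlib

section
/- Let Γ = (V,E) be a finite connected d-regular graph for some d ≥ 3, let G ≤ Aut Γ with Γ G-edge-primitive, assume Γ is not isomorphic to K_{d,d}, let {u,v} ∈ E, and let N be a nontrivial normal subgroup of G. If P is a nontrivial normal Sylow p-subgroup of the edge-stabilizer N_{{u,v}} (for some prime p), then P is a Sylow p-subgroup of N. -/
open SimpleGraph

namespace EdgePrimitivePaper

/-! ### Group-theoretic preliminaries -/

/-- `N` is a minimal normal subgroup of `G`. -/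
def IsMinimalNormal {G : Type*} [Group G] (N : Subgroup G) : Prop :=
  N.Normal ∧ N ≠ ⊥ ∧ ∀ M : Subgroup G, M.Normal → M ≠ ⊥ → M ≤ N → M = N

/-- A finite group is almost simple if it has a unique minimal normal subgroup,
which is a nonabelian simple group. -/
def IsAlmostSimpleGroup (G : Type*) [Group G] : Prop :=
  ∃ N : Subgroup G, IsMinimalNormal N ∧ (∀ M : Subgroup G, IsMinimalNormal M → M = N) ∧
    IsSimpleGroup N ∧ ¬ (∀ x y : N, x * y = y * x)

/-- The socle of a group: the subgroup generated by all minimal normal subgroups. -/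
def socle (G : Type*) [Group G] : Subgroup G :=
  ⨆ (N : Subgroup G) (_ : IsMinimalNormal N), N

/-- `P` is a Sylow `p`-subgroup of the subgroup `H`, i.e. a maximal `p`-subgroup of `H`. -/
def IsSylowIn {G : Type*} [Group G] (p : ℕ) (P H : Subgroup G) : Prop :=
  P ≤ H ∧ IsPGroup p P ∧ ∀ Q : Subgroup G, Q ≤ H → IsPGroup p Q → P ≤ Q → Q = P

/-- The `p`-core `O_p(G)`: the largest normal `p`-subgroup of `G`
(here defined as the join of all normal `p`-subgroups). -/
def pCore (p : ℕ) (G : Type*) [Group G] : Subgroup G :=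
  ⨆ (N : Subgroup G) (_ : N.Normal ∧ IsPGroup p N), N

/-! ### Graphs, automorphisms, stabilizers -/

variable {V : Type*} (Γ : SimpleGraph V)

variable {G : Type*} [Group G] (φ : G →* (Γ ≃g Γ))

/-- The stabilizer in `G` (acting on `Γ` through `φ`) of a vertex `v`. -/
def vStab (v : V) : Subgroup G where
  carrier := {g | φ g v = v}
  one_mem' := by simp
  mul_mem' := by
    intro a b ha hb
    simp only [Set.mem_setOf_eq, map_mul, RelIso.mul_apply] at *
    rw [hb, ha]
  inv_mem' := by
    intro a ha
    simp only [Set.mem_setOf_eq, map_inv] at *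
    conv_lhs => rw [← ha]
    exact RelIso.inv_apply_self _ _

/-- The setwise stabilizer in `G` of an unordered pair `e` of vertices. -/
def eStab (e : Sym2 V) : Subgroup G where
  carrier := {g | Sym2.map (φ g) e = e}
  one_mem' := by simp
  mul_mem' := by
    intro a b ha hb
    simp only [Set.mem_setOf_eq, map_mul] at *
    rw [RelIso.coe_mul, ← Sym2.map_map, hb, ha]
  inv_mem' := by
    intro a ha
    simp only [Set.mem_setOf_eq, map_inv] at *
    conv_lhs => rw [← ha]
    rw [Sym2.map_map]
    have hcomp : ⇑(φ a)⁻¹ ∘ ⇑(φ a) = id := funext fun x => RelIso.inv_apply_self _ _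
    rw [hcomp, Sym2.map_id, id_eq]

/-- The arc stabilizer `G_{uv}`. -/
def aStab (u v : V) : Subgroup G := vStab Γ φ u ⊓ vStab Γ φ v

/-- `G` is transitive on the vertices of `Γ`. -/
def IsVertexTransitive : Prop := ∀ u v : V, ∃ g : G, φ g u = v

/-- `G` is transitive on the edge set of `Γ` (which is required to be nonempty). -/
def IsEdgeTransitive : Prop :=
  Γ.edgeSet.Nonempty ∧ ∀ e₁ ∈ Γ.edgeSet, ∀ e₂ ∈ Γ.edgeSet, ∃ g : G, Sym2.map (φ g) e₁ = e₂

/-- `Γ` is `G`-edge-primitive: `G` is transitive on edges and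
every edge stabilizer is a maximal subgroup of `G`. -/
def IsEdgePrimitive : Prop :=
  IsEdgeTransitive Γ φ ∧ ∀ e ∈ Γ.edgeSet, IsCoatom (eStab Γ φ e)

/-- An `s`-arc of `Γ`: a sequence of `s+1` vertices, consecutive ones adjacent,
with no immediate returns. -/
def IsSArc (s : ℕ) (p : Fin (s + 1) → V) : Prop :=
  (∀ (i : ℕ) (h : i + 1 ≤ s), Γ.Adj (p ⟨i, by omega⟩) (p ⟨i + 1, by omega⟩)) ∧
  (∀ (i : ℕ) (h : i + 2 ≤ s), p ⟨i, by omega⟩ ≠ p ⟨i + 2, by omega⟩)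

/-- `Γ` is `(G,s)`-arc-transitive: `Γ` has an `s`-arc and `G` is transitive on `s`-arcs. -/
def IsSArcTransitive (s : ℕ) : Prop :=
  (∃ p, IsSArc Γ s p) ∧
    ∀ p q, IsSArc Γ s p → IsSArc Γ s q → ∃ g : G, ∀ i, φ g (p i) = q i

/-- `N` (a subgroup of `G`) is transitive on the arcs of `Γ`. -/
def SubgroupArcTransitive (N : Subgroup G) : Prop :=
  ∀ a b c d : V, Γ.Adj a b → Γ.Adj c d → ∃ g ∈ N, φ g a = c ∧ φ g b = d

/-- `N` (a subgroup of `G`) is transitive on the vertices of `Γ`. -/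
def SubgroupVertexTransitive (N : Subgroup G) : Prop :=
  ∀ u v : V, ∃ g ∈ N, φ g u = v

/-- The permutation of the neighbourhood `Γ(v)` induced by an element of `G_v`. -/
def localPerm (v : V) (g : ↥(vStab Γ φ v)) : Equiv.Perm (Γ.neighborSet v) where
  toFun x := ⟨φ (g : G) x, by
    have hx : Γ.Adj v x := x.2
    have hgv : φ (g : G) v = v := g.2
    have := (φ (g : G)).map_rel_iff.mpr hx
    rwa [hgv] at this⟩
  invFun x := ⟨φ (g : G)⁻¹ x, by
    have hx : Γ.Adj v x := x.2
    have hgv : φ (g : G) v = v := g.2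
    have hgv' : φ (g : G)⁻¹ v = v := by
      rw [map_inv]
      have h2 := RelIso.inv_apply_self (φ (g : G)) v
      rwa [hgv] at h2
    have := (φ (g : G)⁻¹).map_rel_iff.mpr hx
    rwa [hgv'] at this⟩
  left_inv x := by
    ext
    simp only [map_inv]
    exact RelIso.inv_apply_self _ _
  right_inv x := by
    ext
    simp only [map_inv]
    exact RelIso.apply_inv_self _ _

/-- The homomorphism from `G_v` to the permutation group of the neighbourhood `Γ(v)`,
i.e. the local action of `G_v` on `Γ(v)`. -/
def localHom (v : V) : ↥(vStab Γ φ v) →* Equiv.Perm (Γ.neighborSet v) where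
  toFun := localPerm Γ φ v
  map_one' := by
    ext x
    simp [localPerm]
  map_mul' g h := by
    ext x
    simp [localPerm, RelIso.mul_apply]

/-- The permutation group `G_v^{Γ(v)}` induced by `G_v` on `Γ(v)`. -/
def localGroup (v : V) : Subgroup (Equiv.Perm (Γ.neighborSet v)) :=
  (localHom Γ φ v).range

/-- The permutation group induced on `Γ(v)` by a subgroup `H ≤ G_v`. -/
def inducedLocal (H : Subgroup G) (v : V) : Subgroup (Equiv.Perm (Γ.neighborSet v)) :=
  Subgroup.map (localHom Γ φ v) (H.subgroupOf (vStab Γ φ v))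

/-- The kernel `G_v^{[1]}` of the action of `G_v` on `Γ(v)`, as a subgroup of `G`. -/
def localKernel (v : V) : Subgroup G :=
  Subgroup.map (vStab Γ φ v).subtype (localHom Γ φ v).ker

/-- `Γ` is `G`-locally primitive: every `G_v^{Γ(v)}` is a primitive permutation group,
i.e. transitive with maximal point stabilizers. -/
def IsLocallyPrimitive : Prop :=
  ∀ v : V, (∀ x y : Γ.neighborSet v, ∃ σ ∈ localGroup Γ φ v, σ x = y) ∧
    ∀ x : Γ.neighborSet v, IsCoatom (MulAction.stabilizer (localGroup Γ φ v) x)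

end EdgePrimitivePaper

open EdgePrimitivePaper in
/-- **Theorem 3.3(1).** Under edge-primitivity with `Γ ≇ K_{d,d}`: if `P` is a
nontrivial normal Sylow `p`-subgroup of the edge stabilizer `N_{{u,v}}` of a nontrivial
normal subgroup `N` of `G`, then `P` is a Sylow `p`-subgroup of `N`. -/
theorem stmt_3 {V : Type*} [Fintype V] (Γ : SimpleGraph V) [DecidableRel Γ.Adj]
    (d : ℕ) (hd : 3 ≤ d) (hconn : Γ.Connected) (hreg : Γ.IsRegularOfDegree d)
    (A : Subgroup (Γ ≃g Γ))
    (hprim : IsEdgePrimitive Γ A.subtype)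
    (hnotbip : ¬ Nonempty (Γ ≃g completeBipartiteGraph (Fin d) (Fin d)))
    {u v : V} (huv : s(u, v) ∈ Γ.edgeSet)
    (N : Subgroup A) (hN : N.Normal) (hNbot : N ≠ ⊥)
    (p : ℕ) (hp : p.Prime) (P : Subgroup A) (hPbot : P ≠ ⊥)
    (hPnormal : ∀ g ∈ N ⊓ eStab Γ A.subtype s(u, v), ∀ x ∈ P, g * x * g⁻¹ ∈ P)
    (hPsyl : IsSylowIn p P (N ⊓ eStab Γ A.subtype s(u, v))) :
    IsSylowIn p P N := by
  classical
  haveI : Fact p.Prime := ⟨hp⟩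
  haveI finAut : Finite (Γ ≃g Γ) := Finite.of_injective
    (fun f => (f : V → V)) (fun f g h => by
      apply RelIso.coe_fn_injective; exact h)
  set φ := A.subtype with hφ
  set E : Subgroup A := eStab Γ A.subtype s(u, v) with hE
  set H : Subgroup A := N ⊓ E with hHdef
  obtain ⟨hPH, hPp, hPmax⟩ := hPsyl
  -- `H` normalizes `P`
  have hHnorm : H ≤ (Subgroup.normalizer (P : Set A)) := by
    intro g hg
    rw [Subgroup.mem_normalizer_iff]
    intro h
    constructor
    · intro hh; exact hPnormal g hg h hh
    · intro hh
      have := hPnormal g⁻¹ (inv_mem hg) _ hh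
      simpa [mul_assoc] using this
  -- every element of `E` normalizes `P`
  have conjP : ∀ g ∈ E, ∀ x ∈ P, g * x * g⁻¹ ∈ P := by
    intro g hg x hx
    set Pg : Subgroup A := Subgroup.map (MulAut.conj g).toMonoidHom P with hPg
    have hPgH : Pg ≤ H := by
      rintro _ ⟨y, hy, rfl⟩
      have hyH : y ∈ H := hPH hy
      refine ⟨?_, ?_⟩
      · exact hN.conj_mem y hyH.1 g
      · exact E.mul_mem (E.mul_mem hg hyH.2) (E.inv_mem hg)
    have hPgp : IsPGroup p Pg := hPp.map _
    have hsup : IsPGroup p (Pg ⊔ P : Subgroup A) :=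
      IsPGroup.to_sup_of_normal_right' hPgp hPp (hPgH.trans hHnorm)
    have heq : Pg ⊔ P = P := hPmax _ (sup_le hPgH hPH) hsup le_sup_right
    have : g * x * g⁻¹ ∈ Pg := ⟨x, hx, rfl⟩
    rw [← heq]; exact Subgroup.mem_sup_left this
  have hEnorm : E ≤ (Subgroup.normalizer (P : Set A)) := by
    intro g hg
    rw [Subgroup.mem_normalizer_iff]
    intro h
    constructor
    · intro hh; exact conjP g hg h hh
    · intro hh
      have := conjP g⁻¹ (inv_mem hg) _ hh
      simpa [mul_assoc] using this
  -- Edge primitivity: the normalizer is `E` or everything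
  have hco : IsCoatom E := hprim.2 s(u, v) huv
  rcases eq_or_lt_of_le hEnorm with hNorE | hlt
  · -- normalizer = E case : prove Sylow-ness
    refine ⟨hPH.trans inf_le_left, hPp, ?_⟩
    intro Q hQN hQp hPQ
    by_contra hne
    have hPltQ : P < Q := lt_of_le_of_ne hPQ (Ne.symm hne)
    haveI : Finite (↥Q) := Subtype.finite
    haveI : Group.IsNilpotent (↥Q) := hQp.isNilpotent
    have hnc : NormalizerCondition (↥Q) := normalizerCondition_of_isNilpotent
    have hPQ' : P.subgroupOf Q < ⊤ := by
      rw [lt_top_iff_ne_top]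
      intro htop
      apply hne
      refine le_antisymm ?_ hPQ
      intro x hxQ
      have hmem : (⟨x, hxQ⟩ : ↥Q) ∈ P.subgroupOf Q := by
        rw [htop]; exact Subgroup.mem_top _
      exact Subgroup.mem_subgroupOf.mp hmem
    obtain ⟨x, hxnorm, hxnot⟩ := SetLike.exists_of_lt (hnc _ hPQ')
    -- `x : ↥Q` normalizes `P` in `A`
    have hxnormA : (x : A) ∈ (Subgroup.normalizer (P : Set A)) := by
      rw [Subgroup.mem_normalizer_iff]
      intro h
      constructor
      · intro hh
        have hhQ : h ∈ Q := hPQ hh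
        have : (⟨h, hhQ⟩ : ↥Q) ∈ P.subgroupOf Q := Subgroup.mem_subgroupOf.mpr hh
        have := (Subgroup.mem_normalizer_iff.mp hxnorm ⟨h, hhQ⟩).mp this
        exact Subgroup.mem_subgroupOf.mp this
      · intro hh
        have hconjQ : (x : A) * h * (x : A)⁻¹ ∈ Q := hPQ hh
        have hhQ : h ∈ Q := by
          have := mul_mem (mul_mem (inv_mem x.2) hconjQ) x.2
          simpa [mul_assoc] using this
        have hmem : x * ⟨h, hhQ⟩ * x⁻¹ ∈ P.subgroupOf Q := by
          rw [Subgroup.mem_subgroupOf]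
          exact hh
        have := (Subgroup.mem_normalizer_iff.mp hxnorm ⟨h, hhQ⟩).mpr hmem
        exact Subgroup.mem_subgroupOf.mp this
    -- then `x ∈ Q ⊓ normalizer ≤ H`, a p-subgroup containing P, so equals P
    set K : Subgroup A := Q ⊓ (Subgroup.normalizer (P : Set A)) with hK
    have hKH : K ≤ H := by
      intro y hy
      exact ⟨hQN hy.1, hNorE ▸ hy.2⟩
    have hKp : IsPGroup p K := hQp.to_le inf_le_left
    have hPK : P ≤ K := le_inf hPQ (Subgroup.le_normalizer)
    have hKeq : K = P := hPmax K hKH hKp hPK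
    have : (x : A) ∈ K := ⟨x.2, hxnormA⟩
    rw [hKeq] at this
    exact hxnot (Subgroup.mem_subgroupOf.mpr this)
  · -- normalizer = ⊤ case : contradiction with `P ≠ ⊥`
    exfalso
    have htop : (Subgroup.normalizer (P : Set A)) = ⊤ := hco.2 _ hlt
    have hPnormalA : P.Normal := (Subgroup.normalizer_eq_top_iff (H := P)).mp htop
    -- P stabilizes every edge
    have hstab : ∀ x ∈ P, ∀ e ∈ Γ.edgeSet, Sym2.map (φ x) e = e := by
      intro x hx e he
      obtain ⟨g, hg⟩ := hprim.1.2 s(u, v) huv e he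
      have hy : g⁻¹ * x * g ∈ P := by
        have := hPnormalA.conj_mem x hx g⁻¹
        simpa using this
      have hyE : g⁻¹ * x * g ∈ E := hPH hy |>.2
      have hyfix : Sym2.map (φ (g⁻¹ * x * g)) s(u, v) = s(u, v) := hyE
      calc Sym2.map (φ x) e = Sym2.map (φ x) (Sym2.map (φ g) s(u, v)) := by rw [hg]
        _ = Sym2.map ((φ x) ∘ (φ g)) s(u, v) := by rw [Sym2.map_map]
        _ = Sym2.map ((φ g) ∘ (φ (g⁻¹ * x * g))) s(u, v) := by
              congr 1
              ext w
              simp only [Function.comp_apply, map_mul, map_inv, RelIso.mul_apply]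
              rw [RelIso.apply_inv_self]
        _ = Sym2.map (φ g) (Sym2.map (φ (g⁻¹ * x * g)) s(u, v)) := by rw [Sym2.map_map]
        _ = e := by rw [hyfix, hg]
    -- hence P is trivial
    apply hPbot
    rw [Subgroup.eq_bot_iff_forall]
    intro x hx
    have hfix : ∀ w : V, φ x w = w := by
      intro w
      have hcard : 1 < Γ.degree w := by rw [hreg w]; omega
      obtain ⟨a, ha, b, hb, hab⟩ := Finset.one_lt_card.mp hcard
      have hadj_a : Γ.Adj w a := (Γ.mem_neighborFinset w a).mp ha
      have hadj_b : Γ.Adj w b := (Γ.mem_neighborFinset w b).mp hb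
      have hea := hstab x hx s(w, a) (Γ.mem_edgeSet.mpr hadj_a)
      have heb := hstab x hx s(w, b) (Γ.mem_edgeSet.mpr hadj_b)
      rw [Sym2.map_pair_eq, Sym2.eq_iff] at hea heb
      rcases hea with ⟨h1, _⟩ | ⟨h1, _⟩
      · exact h1
      · rcases heb with ⟨h2, _⟩ | ⟨h2, _⟩
        · exact h2
        · exact (hab (h1.symm.trans h2)).elim
    have : (x : Γ ≃g Γ) = 1 := by
      apply RelIso.coe_fn_injective
      funext w
      exact hfix w
    exact Subtype.ext this
end

section
/- Let Γ = (V,E) be a finite connected d-regular graph for some d ≥ 3, let G ≤ Aut Γ with Γ G-edge-primitive, let {u,v} ∈ E, and let N be a nontrivial normal subgroup of G. If N acts transitively on V, then 2·|N_v| = d·|N_{{u,v}}|; if N is intransitive on V, then N_{{u,v}} = N_{uv} and |N_v| = d·|N_{uv}|. In particular, N_v ≠ 1 and N_v ≠ N_{{u,v}}. -/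
open SimpleGraph

open scoped Pointwise

section Aux

open EdgePrimitivePaper

/-- Orbit–stabilizer in homomorphism form. -/
private lemma card_eq_of_transitive' {K X : Type*} [Group K] (ρ : K →* Equiv.Perm X) (x : X)
    (h : ∀ y : X, ∃ g : K, ρ g x = y) :
    Nat.card K = Nat.card X * Nat.card {g : K // ρ g x = x} := by
  letI : MulAction K X := MulAction.compHom X ρ
  have horb : MulAction.orbit K x = Set.univ := by
    ext y
    simp only [Set.mem_univ, iff_true, MulAction.mem_orbit_iff]
    exact h y
  have hc := Nat.card_congr (MulAction.orbitProdStabilizerEquivGroup K x)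
  rw [Nat.card_prod] at hc
  rw [← hc, horb]
  congr 1
  exact (Nat.card_congr (Equiv.Set.univ X))

private def permHomV {V : Type*} (Γ : SimpleGraph V) : (Γ ≃g Γ) →* Equiv.Perm V where
  toFun f := f.toEquiv
  map_one' := rfl
  map_mul' _ _ := Equiv.ext fun _ => rfl

private def permHomE {V : Type*} (Γ : SimpleGraph V) : (Γ ≃g Γ) →* Equiv.Perm ↥Γ.edgeSet where
  toFun f := f.mapEdgeSet
  map_one' := by
    ext e
    simp [SimpleGraph.Iso.mapEdgeSet, SimpleGraph.Hom.mapEdgeSet]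
  map_mul' f g := by
    ext e
    simp [SimpleGraph.Iso.mapEdgeSet, SimpleGraph.Hom.mapEdgeSet, Sym2.map_map]

private def infEquiv {A' : Type*} [Group A'] (N S : Subgroup A') :
    {g : ↥N // (↑g : A') ∈ S} ≃ ↥(N ⊓ S) where
  toFun x := ⟨↑↑x.1, Subgroup.mem_inf.mpr ⟨x.1.2, x.2⟩⟩
  invFun y := ⟨⟨↑y, (Subgroup.mem_inf.mp y.2).1⟩, (Subgroup.mem_inf.mp y.2).2⟩
  left_inv _ := rfl
  right_inv _ := rfl

end Aux

open EdgePrimitivePaper in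
/-- **Lemma 3.1.** For a nontrivial normal subgroup `N` of `G`: if `N` is
vertex-transitive then `2|N_v| = d|N_{{u,v}}|`; if `N` is intransitive on vertices then
`N_{{u,v}} = N_{uv}` and `|N_v| = d|N_{uv}|`. In particular `N_v ≠ 1` and
`N_v ≠ N_{{u,v}}`. -/
theorem stmt_7 {V : Type*} [Fintype V] (Γ : SimpleGraph V) [DecidableRel Γ.Adj]
    (d : ℕ) (hd : 3 ≤ d) (hconn : Γ.Connected) (hreg : Γ.IsRegularOfDegree d)
    (A : Subgroup (Γ ≃g Γ))
    (hprim : IsEdgePrimitive Γ A.subtype)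
    {u v : V} (huv : s(u, v) ∈ Γ.edgeSet)
    (N : Subgroup A) (hN : N.Normal) (hNbot : N ≠ ⊥) :
    (SubgroupVertexTransitive Γ A.subtype N →
        2 * Nat.card ↥(N ⊓ vStab Γ A.subtype v) =
          d * Nat.card ↥(N ⊓ eStab Γ A.subtype s(u, v))) ∧
    (¬ SubgroupVertexTransitive Γ A.subtype N →
        N ⊓ eStab Γ A.subtype s(u, v) = N ⊓ aStab Γ A.subtype u v ∧
        Nat.card ↥(N ⊓ vStab Γ A.subtype v) =
          d * Nat.card ↥(N ⊓ aStab Γ A.subtype u v)) ∧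
    N ⊓ vStab Γ A.subtype v ≠ ⊥ ∧
    N ⊓ vStab Γ A.subtype v ≠ N ⊓ eStab Γ A.subtype s(u, v) := by
  classical
  haveI hfin : Finite (Γ ≃g Γ) := Finite.of_injective _ RelIso.toEquiv_injective
  set φ := A.subtype with hφdef
  -- basic facts
  have hadj : Γ.Adj u v := Γ.mem_edgeSet.mp huv
  have hmul : ∀ (x y : ↥A) (w : V), φ (x * y) w = φ x (φ y w) := by
    intro x y w; rw [map_mul]; rfl
  have hinv : ∀ (x : ↥A) (w : V), φ x⁻¹ (φ x w) = w := by
    intro x w; rw [map_inv]; exact RelIso.inv_apply_self _ _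
  have hone : ∀ w : V, φ (1 : ↥A) w = w := by
    intro w; rw [map_one]; rfl
  have hmape : ∀ (x y : ↥A) (e : Sym2 V), Sym2.map (φ (x * y)) e = Sym2.map (φ x) (Sym2.map (φ y) e) := by
    intro x y e; rw [map_mul, RelIso.coe_mul, ← Sym2.map_map]
  have hAtrans := hprim.1.2
  have hcoatom := hprim.2 s(u, v) huv
  haveI := hN
  -- N is transitive on edges (from the base edge)
  have hNtrans : ∀ e ∈ Γ.edgeSet, ∃ n ∈ N, Sym2.map (φ n) s(u, v) = e := by
    by_cases hNH : N ≤ eStab Γ φ s(u, v)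
    · exfalso
      apply hNbot
      have hfixE : ∀ n ∈ N, ∀ e ∈ Γ.edgeSet, Sym2.map (φ n) e = e := by
        intro n hn e he
        obtain ⟨a, ha⟩ := hAtrans s(u, v) huv e he
        have h1 : a⁻¹ * n * a ∈ N := hN.conj_mem' n hn a
        have h2 : Sym2.map (φ (a⁻¹ * n * a)) s(u, v) = s(u, v) := hNH h1
        have hna : n * a = a * (a⁻¹ * n * a) := by group
        calc Sym2.map (φ n) e = Sym2.map (φ n) (Sym2.map (φ a) s(u, v)) := by rw [ha]
          _ = Sym2.map (φ (n * a)) s(u, v) := (hmape n a _).symm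
          _ = Sym2.map (φ (a * (a⁻¹ * n * a))) s(u, v) := by rw [hna]
          _ = Sym2.map (φ a) (Sym2.map (φ (a⁻¹ * n * a)) s(u, v)) := hmape _ _ _
          _ = Sym2.map (φ a) s(u, v) := by rw [h2]
          _ = e := ha
      have hfixV : ∀ n ∈ N, ∀ x : V, φ n x = x := by
        intro n hn x
        have hcard : 1 < Fintype.card (Γ.neighborSet x) := by
          rw [Γ.card_neighborSet_eq_degree, hreg x]; omega
        obtain ⟨y, z, hyz⟩ := Fintype.exists_pair_of_one_lt_card hcard
        have hy := hfixE n hn s(x, (y : V)) (Γ.mem_edgeSet.mpr y.2)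
        have hz := hfixE n hn s(x, (z : V)) (Γ.mem_edgeSet.mpr z.2)
        rw [Sym2.map_pair_eq, Sym2.eq_iff] at hy hz
        rcases hy with ⟨h1, -⟩ | ⟨h1, h2⟩
        · exact h1
        rcases hz with ⟨h3, -⟩ | ⟨h3, h4⟩
        · exact h3
        · exact absurd (Subtype.ext (h1 ▸ h3)) hyz
      rw [Subgroup.eq_bot_iff_forall]
      intro n hn
      have : (↑n : Γ ≃g Γ) = 1 := RelIso.ext fun x => hfixV n hn x
      exact Subtype.ext this
    · have hlt : eStab Γ φ s(u, v) < N ⊔ eStab Γ φ s(u, v) := right_lt_sup.mpr hNH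
      have hsup : N ⊔ eStab Γ φ s(u, v) = ⊤ := hcoatom.2 _ hlt
      intro e he
      obtain ⟨a, ha⟩ := hAtrans s(u, v) huv e he
      have haa : a ∈ ((N : Set ↥A) * (eStab Γ φ s(u, v) : Set ↥A)) := by
        rw [← Subgroup.normal_mul, hsup]
        exact Subgroup.mem_top a
      obtain ⟨n, hn, h, hh, rfl⟩ := Set.mem_mul.mp haa
      have hh' : Sym2.map (φ h) s(u, v) = s(u, v) := hh
      refine ⟨n, hn, ?_⟩
      rw [← ha, hmape, hh']
  -- Orbit-stabilizer counting on edges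
  have hρE : ∀ (g : ↥N) (e : ↥Γ.edgeSet),
      (((permHomE Γ).comp (φ.comp N.subtype) g e : ↥Γ.edgeSet) : Sym2 V) = Sym2.map (φ ↑g) ↑e :=
    fun g e => rfl
  have hNE : Nat.card ↥N = Nat.card ↥Γ.edgeSet * Nat.card ↥(N ⊓ eStab Γ φ s(u, v)) := by
    rw [card_eq_of_transitive' ((permHomE Γ).comp (φ.comp N.subtype)) ⟨s(u, v), huv⟩ ?_]
    · congr 1
      refine Nat.card_congr ((Equiv.subtypeEquivRight fun g => ?_).trans (infEquiv N _))
      rw [Subtype.ext_iff, hρE]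
      exact Iff.rfl
    · rintro ⟨e, he⟩
      obtain ⟨n, hn, hne⟩ := hNtrans e he
      exact ⟨⟨n, hn⟩, Subtype.ext (by rw [hρE]; exact hne)⟩
  -- Edge count
  have hVd : Nat.card ↥Γ.edgeSet * 2 = Nat.card V * d := by
    have h1 : ∑ x : V, Γ.degree x = 2 * Γ.edgeFinset.card := Γ.sum_degrees_eq_twice_card_edges
    have h2 : ∑ x : V, Γ.degree x = Fintype.card V * d := by
      rw [Finset.sum_congr rfl fun x _ => hreg x, Finset.sum_const, Finset.card_univ, smul_eq_mul]
    have h3 : Nat.card ↥Γ.edgeSet = Γ.edgeFinset.card := by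
      rw [Nat.card_eq_fintype_card, SimpleGraph.card_edgeSet]
    rw [h3, Nat.card_eq_fintype_card]
    omega
  -- Vertex-transitive case
  have main1 : SubgroupVertexTransitive Γ φ N →
      2 * Nat.card ↥(N ⊓ vStab Γ φ v) = d * Nat.card ↥(N ⊓ eStab Γ φ s(u, v)) := by
    intro htrans
    have hNV : Nat.card ↥N = Nat.card V * Nat.card ↥(N ⊓ vStab Γ φ v) := by
      rw [card_eq_of_transitive' ((permHomV Γ).comp (φ.comp N.subtype)) v ?_]
      · congr 1
        refine Nat.card_congr ((Equiv.subtypeEquivRight fun g => ?_).trans (infEquiv N _))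
        exact Iff.rfl
      · intro y
        obtain ⟨n, hn, hny⟩ := htrans v y
        exact ⟨⟨n, hn⟩, hny⟩
    haveI : Nonempty V := ⟨v⟩
    have hVpos : 0 < Nat.card V := Nat.card_pos
    refine Nat.eq_of_mul_eq_mul_left hVpos ?_
    calc Nat.card V * (2 * Nat.card ↥(N ⊓ vStab Γ φ v))
        = 2 * (Nat.card V * Nat.card ↥(N ⊓ vStab Γ φ v)) := by ring
      _ = 2 * Nat.card ↥N := by rw [hNV]
      _ = 2 * (Nat.card ↥Γ.edgeSet * Nat.card ↥(N ⊓ eStab Γ φ s(u, v))) := by rw [hNE]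
      _ = (Nat.card ↥Γ.edgeSet * 2) * Nat.card ↥(N ⊓ eStab Γ φ s(u, v)) := by ring
      _ = (Nat.card V * d) * Nat.card ↥(N ⊓ eStab Γ φ s(u, v)) := by rw [hVd]
      _ = Nat.card V * (d * Nat.card ↥(N ⊓ eStab Γ φ s(u, v))) := by ring
  -- Intransitive case
  have main2 : ¬ SubgroupVertexTransitive Γ φ N →
      N ⊓ eStab Γ φ s(u, v) = N ⊓ aStab Γ φ u v ∧
      Nat.card ↥(N ⊓ vStab Γ φ v) = d * Nat.card ↥(N ⊓ aStab Γ φ u v) := by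
    intro hnt
    -- orbits
    set Ou : Set V := {x | ∃ n ∈ N, φ n u = x} with hOu
    set Ov : Set V := {x | ∃ n ∈ N, φ n v = x} with hOv
    have hedge : ∀ e ∈ Γ.edgeSet, ∃ n ∈ N, e = s(φ n u, φ n v) := by
      intro e he
      obtain ⟨n, hn, hne⟩ := hNtrans e he
      exact ⟨n, hn, by rw [← hne, Sym2.map_pair_eq]⟩
    have hcover : ∀ x : V, x ∈ Ou ∨ x ∈ Ov := by
      intro x
      have hcard : 0 < Fintype.card (Γ.neighborSet x) := by
        rw [Γ.card_neighborSet_eq_degree, hreg x]; omega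
      obtain ⟨y⟩ := Fintype.card_pos_iff.mp hcard
      obtain ⟨n, hn, hne⟩ := hedge s(x, (y : V)) (Γ.mem_edgeSet.mpr y.2)
      rw [Sym2.eq_iff] at hne
      rcases hne with ⟨h1, -⟩ | ⟨h1, -⟩
      · exact Or.inl ⟨n, hn, h1.symm⟩
      · exact Or.inr ⟨n, hn, h1.symm⟩
    have hvOv : v ∈ Ov := ⟨1, one_mem N, hone v⟩
    have hdisj : ∀ x : V, x ∈ Ou → x ∈ Ov → False := by
      rintro x ⟨n, hn, hnx⟩ ⟨m, hm, hmx⟩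
      apply hnt
      have hOvall : ∀ w : V, w ∈ Ov := by
        intro w
        rcases hcover w with ⟨k, hk, hkw⟩ | h
        · refine ⟨k * n⁻¹ * m, mul_mem (mul_mem hk (inv_mem hn)) hm, ?_⟩
          rw [hmul, hmul, hmx, ← hnx, hinv, hkw]
        · exact h
      intro w1 w2
      obtain ⟨k1, hk1, hk1w⟩ := hOvall w1
      obtain ⟨k2, hk2, hk2w⟩ := hOvall w2
      refine ⟨k2 * k1⁻¹, mul_mem hk2 (inv_mem hk1), ?_⟩
      rw [hmul, ← hk1w, hinv, hk2w]
    have hnbrOu : ∀ y : V, Γ.Adj v y → y ∈ Ou := by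
      intro y hy
      obtain ⟨n, hn, hne⟩ := hedge s(v, y) (Γ.mem_edgeSet.mpr hy)
      rw [Sym2.eq_iff] at hne
      rcases hne with ⟨h1, -⟩ | ⟨h1, h2⟩
      · exact absurd hvOv (fun hv => hdisj v ⟨n, hn, h1.symm⟩ hv)
      · exact ⟨n, hn, h2.symm⟩
    -- N_{{u,v}} = N_{uv}
    have heq : N ⊓ eStab Γ φ s(u, v) = N ⊓ aStab Γ φ u v := by
      apply le_antisymm
      · intro a ha
        obtain ⟨haN, haE⟩ := Subgroup.mem_inf.mp ha
        have haE' : Sym2.map (φ a) s(u, v) = s(u, v) := haE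
        rw [Sym2.map_pair_eq, Sym2.eq_iff] at haE'
        rcases haE' with ⟨h1, h2⟩ | ⟨h1, h2⟩
        · exact Subgroup.mem_inf.mpr ⟨haN, Subgroup.mem_inf.mpr ⟨h1, h2⟩⟩
        · exact absurd hvOv (fun hv => hdisj v ⟨a, haN, h1⟩ hv)
      · intro a ha
        obtain ⟨haN, haA⟩ := Subgroup.mem_inf.mp ha
        obtain ⟨hau, hav⟩ := Subgroup.mem_inf.mp haA
        have hau' : φ a u = u := hau
        have hav' : φ a v = v := hav
        refine Subgroup.mem_inf.mpr ⟨haN, ?_⟩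
        show Sym2.map (φ a) s(u, v) = s(u, v)
        rw [Sym2.map_pair_eq, hau', hav']
    -- N_v transitive on neighbours of v
    have hadj' : Γ.Adj v u := hadj.symm
    have hKtrans : ∀ y : Γ.neighborSet v, ∃ n ∈ N, φ n v = v ∧ φ n u = (y : V) := by
      intro y
      obtain ⟨n, hn, hne⟩ := hNtrans s(v, (y : V)) (Γ.mem_edgeSet.mpr y.2)
      rw [Sym2.map_pair_eq, Sym2.eq_iff] at hne
      rcases hne with ⟨h1, h2⟩ | ⟨h1, h2⟩
      · exact absurd hvOv (fun hv => hdisj v ⟨n, hn, h1⟩ hv)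
      · exact ⟨n, hn, h2, h1⟩
    refine ⟨heq, ?_⟩
    -- orbit-stabilizer for N ∩ G_v on the neighbourhood
    have hds : Nat.card ↥(Γ.neighborSet v) = d := by
      rw [Nat.card_eq_fintype_card, Γ.card_neighborSet_eq_degree, hreg v]
    have hρn : ∀ (g : ↥(N ⊓ vStab Γ φ v)) (x : Γ.neighborSet v),
        ((((localHom Γ φ v).comp (Subgroup.inclusion inf_le_right)) g x : Γ.neighborSet v) : V)
          = φ ↑g ↑x := fun g x => rfl
    rw [card_eq_of_transitive'
        ((localHom Γ φ v).comp (Subgroup.inclusion (inf_le_right : N ⊓ vStab Γ φ v ≤ vStab Γ φ v)))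
        (⟨u, hadj'⟩ : Γ.neighborSet v) ?_]
    · rw [hds]
      congr 1
      have emid : {g : ↥(N ⊓ vStab Γ φ v) // φ (↑g : ↥A) u = u} ≃ ↥(N ⊓ aStab Γ φ u v) := by
        refine ⟨fun x => ⟨↑↑x.1, ?_⟩, fun y => ⟨⟨↑y, ?_⟩, ?_⟩, fun _ => rfl, fun _ => rfl⟩
        · obtain ⟨hN', hv'⟩ := Subgroup.mem_inf.mp x.1.2
          exact Subgroup.mem_inf.mpr ⟨hN', Subgroup.mem_inf.mpr ⟨x.2, hv'⟩⟩
        · obtain ⟨hN', ha'⟩ := Subgroup.mem_inf.mp y.2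
          exact Subgroup.mem_inf.mpr ⟨hN', (Subgroup.mem_inf.mp ha').2⟩
        · exact (Subgroup.mem_inf.mp (Subgroup.mem_inf.mp y.2).2).1
      refine Nat.card_congr ((Equiv.subtypeEquivRight
        (q := fun g : ↥(N ⊓ vStab Γ φ v) => φ (↑g : ↥A) u = u) fun g => ?_).trans emid)
      rw [Subtype.ext_iff, hρn]
    · rintro ⟨y, hy⟩
      obtain ⟨n, hn, hnv, hnu⟩ := hKtrans ⟨y, hy⟩
      exact ⟨⟨n, Subgroup.mem_inf.mpr ⟨hn, hnv⟩⟩, Subtype.ext (by rw [hρn]; exact hnu)⟩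
  -- Assemble
  haveI : Nonempty ↥(N ⊓ eStab Γ φ s(u, v)) := ⟨1⟩
  haveI : Nonempty ↥(N ⊓ aStab Γ φ u v) := ⟨1⟩
  refine ⟨main1, main2, ?_, ?_⟩
  · -- N_v ≠ ⊥
    intro hbot
    have h1 : Nat.card ↥(N ⊓ vStab Γ φ v) = 1 := by rw [hbot]; exact Subgroup.card_bot
    by_cases ht : SubgroupVertexTransitive Γ φ N
    · have h2 := main1 ht
      rw [h1] at h2
      have hpos : 0 < Nat.card ↥(N ⊓ eStab Γ φ s(u, v)) := Nat.card_pos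
      have h3 : 3 * 1 ≤ d * Nat.card ↥(N ⊓ eStab Γ φ s(u, v)) := Nat.mul_le_mul hd hpos
      omega
    · have h2 := (main2 ht).2
      rw [h1] at h2
      have hpos : 0 < Nat.card ↥(N ⊓ aStab Γ φ u v) := Nat.card_pos
      have h3 : 3 * 1 ≤ d * Nat.card ↥(N ⊓ aStab Γ φ u v) := Nat.mul_le_mul hd hpos
      omega
  · -- N_v ≠ N_{{u,v}}
    intro hEq
    by_cases ht : SubgroupVertexTransitive Γ φ N
    · have h2 := main1 ht
      have h1 : Nat.card ↥(N ⊓ vStab Γ φ v) = Nat.card ↥(N ⊓ eStab Γ φ s(u, v)) := by rw [hEq]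
      have hpos : 0 < Nat.card ↥(N ⊓ eStab Γ φ s(u, v)) := Nat.card_pos
      rw [h1] at h2
      have : 2 = d := Nat.eq_of_mul_eq_mul_right hpos h2
      omega
    · obtain ⟨heq, h2⟩ := main2 ht
      have h1 : Nat.card ↥(N ⊓ vStab Γ φ v) = Nat.card ↥(N ⊓ aStab Γ φ u v) := by
        rw [hEq, heq]
      rw [h1] at h2
      have hpos : 0 < Nat.card ↥(N ⊓ aStab Γ φ u v) := Nat.card_pos
      have : 1 * Nat.card ↥(N ⊓ aStab Γ φ u v) = d * Nat.card ↥(N ⊓ aStab Γ φ u v) := by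
        rw [one_mul, ← h2]
      have hd1 : 1 = d := Nat.eq_of_mul_eq_mul_right hpos this
      omega
end

section
/- Let Γ = (V,E) be a finite connected d-regular graph for some d ≥ 3 and let G ≤ Aut Γ with Γ G-edge-primitive. If Γ is not isomorphic to K_{d,d}, then G is insoluble and every edge-stabilizer G_{{u,v}} is a nonabelian group. -/
open SimpleGraph

namespace EdgePrimitivePaper
section AuxBasic

open SimpleGraph Subgroup

variable {V : Type*} {Γ : SimpleGraph V} {A : Subgroup (Γ ≃g Γ)}

lemma sym2_map_pair_eq_iff {f : V → V} {u v x y : V} :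
    Sym2.map f s(u,v) = s(x,y) ↔ (f u = x ∧ f v = y) ∨ (f u = y ∧ f v = x) := by
  rw [Sym2.map_pair_eq, Sym2.eq_iff]

lemma adj_apply {g : ↥A} {x y : V} (h : Γ.Adj x y) :
    Γ.Adj (A.subtype g x) (A.subtype g y) :=
  (A.subtype g).map_rel_iff.mpr h

lemma exists_map_pair (htrans : EdgePrimitivePaper.IsEdgeTransitive Γ A.subtype)
    {u v x y : V} (h1 : Γ.Adj u v) (h2 : Γ.Adj x y) :
    ∃ g : ↥A, (A.subtype g u = x ∧ A.subtype g v = y) ∨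
      (A.subtype g u = y ∧ A.subtype g v = x) := by
  obtain ⟨g, hg⟩ := htrans.2 s(u,v) (Γ.mem_edgeSet.mpr h1)
    s(x,y) (Γ.mem_edgeSet.mpr h2)
  exact ⟨g, sym2_map_pair_eq_iff.mp hg⟩

lemma subtype_one_apply (w : V) : (A.subtype (1 : ↥A)) w = w := by
  rw [map_one]
  rfl

lemma apply_mul (g h : ↥A) (x : V) :
    A.subtype (g * h) x = A.subtype g (A.subtype h x) := by
  rw [map_mul]
  rfl

lemma apply_inv (g : ↥A) (x : V) : A.subtype g⁻¹ (A.subtype g x) = x := by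
  rw [← apply_mul, inv_mul_cancel, subtype_one_apply]

lemma apply_inv' (g : ↥A) {x y : V} (h : A.subtype g x = y) :
    A.subtype g⁻¹ y = x := by
  rw [← h, apply_inv]

lemma sym2_map_mul (g h : ↥A) (e : Sym2 V) :
    Sym2.map (A.subtype (g * h)) e = Sym2.map (A.subtype g) (Sym2.map (A.subtype h) e) := by
  rw [map_mul, RelIso.coe_mul, Sym2.map_map]

lemma sym2_map_one (e : Sym2 V) : Sym2.map (A.subtype (1 : ↥A)) e = e := by
  induction e using Sym2.ind with
  | _ x y => rw [Sym2.map_pair_eq, subtype_one_apply, subtype_one_apply]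

lemma sym2_map_inv_eq (g : ↥A) {e e' : Sym2 V} (h : Sym2.map (A.subtype g) e = e') :
    Sym2.map (A.subtype g⁻¹) e' = e := by
  rw [← h, ← sym2_map_mul, inv_mul_cancel, sym2_map_one]

lemma mem_eStab_iff {g : ↥A} {e : Sym2 V} :
    g ∈ EdgePrimitivePaper.eStab Γ A.subtype e ↔ Sym2.map (A.subtype g) e = e :=
  Iff.rfl

lemma edge_map_mem {g : ↥A} {x y : V} (h : Γ.Adj x y) :
    Sym2.map (A.subtype g) s(x,y) ∈ Γ.edgeSet := by
  rw [Sym2.map_pair_eq, Γ.mem_edgeSet]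
  exact adj_apply h

lemma eq_one_of_forall_fixed {d : ℕ} [Fintype V] [DecidableRel Γ.Adj] (hd : 3 ≤ d)
    (hreg : Γ.IsRegularOfDegree d) {g : ↥A}
    (h : ∀ ⦃x y⦄, Γ.Adj x y → Sym2.map (A.subtype g) s(x,y) = s(x,y)) :
    g = 1 := by
  have key : ∀ w, A.subtype g w = w := by
    intro w
    have hcard : 1 < (Γ.neighborFinset w).card := by
      rw [Γ.card_neighborFinset_eq_degree, hreg w]; omega
    obtain ⟨x, hx, y, hy, hxy⟩ := Finset.one_lt_card.mp hcard
    rw [SimpleGraph.mem_neighborFinset] at hx hy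
    rcases sym2_map_pair_eq_iff.mp (h hx) with ⟨hw, -⟩ | ⟨hw, -⟩
    · exact hw
    · rcases sym2_map_pair_eq_iff.mp (h hy) with ⟨hw2, -⟩ | ⟨hw2, -⟩
      · exact hw2
      · exact absurd (hw ▸ hw2) hxy
  have h1 : (A.subtype g : Γ ≃g Γ) = A.subtype 1 := by
    apply RelIso.ext
    intro x
    rw [key x, subtype_one_apply]
  exact Subgroup.subtype_injective A h1

end AuxBasic
section LemmaA

open SimpleGraph Subgroup Pointwise

theorem normal_comm_eq_bot {V : Type*} [Fintype V] {Γ : SimpleGraph V} [DecidableRel Γ.Adj]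
    {d : ℕ} (hd : 3 ≤ d) (hconn : Γ.Connected) (hreg : Γ.IsRegularOfDegree d)
    {A : Subgroup (Γ ≃g Γ)} (hprim : IsEdgePrimitive Γ A.subtype)
    (hnotbip : ¬ Nonempty (Γ ≃g completeBipartiteGraph (Fin d) (Fin d)))
    {N : Subgroup ↥A} (hNn : N.Normal) (hNc : ∀ x ∈ N, ∀ y ∈ N, x * y = y * x) :
    N = ⊥ := by
  obtain ⟨e₀, he₀⟩ := hprim.1.1
  revert he₀
  induction e₀ using Sym2.ind with
  | _ u v =>
  intro he₀
  by_contra hbot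
  have huv : Γ.Adj u v := Γ.mem_edgeSet.mp he₀
  -- N is not contained in the base edge stabilizer
  have hnotle : ¬ N ≤ eStab Γ A.subtype s(u,v) := by
    intro hle
    apply hbot
    rw [Subgroup.eq_bot_iff_forall]
    intro n hn
    apply eq_one_of_forall_fixed hd hreg
    intro x y hxy
    obtain ⟨g, hg⟩ := exists_map_pair hprim.1 huv hxy
    have hg' : Sym2.map (A.subtype g) s(u,v) = s(x,y) := sym2_map_pair_eq_iff.mpr hg
    have hmem : g⁻¹ * n * g ∈ N := by
      have := hNn.conj_mem n hn g⁻¹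
      rwa [inv_inv] at this
    have hfix : Sym2.map (A.subtype (g⁻¹ * n * g)) s(u,v) = s(u,v) := hle hmem
    calc Sym2.map (A.subtype n) s(x,y)
        = Sym2.map (A.subtype (n * g)) s(u,v) := by rw [sym2_map_mul, hg']
      _ = Sym2.map (A.subtype (g * (g⁻¹ * n * g))) s(u,v) := by
          rw [show n * g = g * (g⁻¹ * n * g) by group]
      _ = s(x,y) := by rw [sym2_map_mul, hfix, hg']
  have hcoatom := hprim.2 s(u,v) he₀
  haveI := hNn
  have hsup : N ⊔ eStab Γ A.subtype s(u,v) = ⊤ := by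
    apply hcoatom.2
    rcases lt_or_eq_of_le (le_sup_right : eStab Γ A.subtype s(u,v) ≤ N ⊔ eStab Γ A.subtype s(u,v)) with h | h
    · exact h
    · exact absurd (le_trans le_sup_left (le_of_eq h.symm)) hnotle
  have hNtrans : ∀ ⦃x y : V⦄, Γ.Adj x y → ∃ n ∈ N,
      (A.subtype n u = x ∧ A.subtype n v = y) ∨ (A.subtype n u = y ∧ A.subtype n v = x) := by
    intro x y hxy
    obtain ⟨g, hg⟩ := exists_map_pair hprim.1 huv hxy
    have hg' : Sym2.map (A.subtype g) s(u,v) = s(x,y) := sym2_map_pair_eq_iff.mpr hg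
    have hgmem : g ∈ (N : Set ↥A) * (eStab Γ A.subtype s(u,v) : Set ↥A) := by
      rw [← Subgroup.normal_mul, hsup]
      simp
    obtain ⟨n, hn, m, hm, rfl⟩ := hgmem
    refine ⟨n, hn, sym2_map_pair_eq_iff.mp ?_⟩
    rw [← hg', sym2_map_mul, mem_eStab_iff.mp hm]
  have hNfree : ∀ n ∈ N, Sym2.map (A.subtype n) s(u,v) = s(u,v) → n = 1 := by
    intro n hn hfix
    apply eq_one_of_forall_fixed hd hreg
    intro x y hxy
    obtain ⟨m, hm, hc⟩ := hNtrans hxy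
    have hm' : Sym2.map (A.subtype m) s(u,v) = s(x,y) := sym2_map_pair_eq_iff.mpr hc
    calc Sym2.map (A.subtype n) s(x,y)
        = Sym2.map (A.subtype (n * m)) s(u,v) := by rw [sym2_map_mul, hm']
      _ = Sym2.map (A.subtype (m * n)) s(u,v) := by rw [hNc n hn m hm]
      _ = s(x,y) := by rw [sym2_map_mul, hfix, hm']
  set Δ1 : Set V := {x | ∃ n ∈ N, A.subtype n u = x} with hΔ1def
  set Δ2 : Set V := {x | ∃ n ∈ N, A.subtype n v = x} with hΔ2def
  have huΔ1 : u ∈ Δ1 := ⟨1, N.one_mem, subtype_one_apply u⟩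
  have hvΔ2 : v ∈ Δ2 := ⟨1, N.one_mem, subtype_one_apply v⟩
  have hcover : ∀ w : V, w ∈ Δ1 ∨ w ∈ Δ2 := by
    intro w
    have hdeg : 0 < (Γ.neighborFinset w).card := by
      rw [Γ.card_neighborFinset_eq_degree, hreg w]; omega
    obtain ⟨x, hx⟩ := Finset.card_pos.mp hdeg
    rw [SimpleGraph.mem_neighborFinset] at hx
    obtain ⟨n, hn, hc⟩ := hNtrans hx
    rcases hc with ⟨h1, _⟩ | ⟨_, h2⟩
    · exact Or.inl ⟨n, hn, h1⟩
    · exact Or.inr ⟨n, hn, h2⟩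
  have hfixu : ∀ n ∈ N, A.subtype n u = u → ∀ x ∈ Δ1, A.subtype n x = x := by
    intro n hn hu x hx
    obtain ⟨m, hm, rfl⟩ := hx
    rw [← apply_mul, hNc n hn m hm, apply_mul, hu]
  have hfixv : ∀ n ∈ N, A.subtype n v = v → ∀ x ∈ Δ2, A.subtype n x = x := by
    intro n hn hv x hx
    obtain ⟨m, hm, rfl⟩ := hx
    rw [← apply_mul, hNc n hn m hm, apply_mul, hv]
  have hgetv : ∀ n ∈ N, ∀ x ∈ Δ2, A.subtype n x = x → A.subtype n v = v := by
    intro n hn x hx hfix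
    obtain ⟨m, hm, rfl⟩ := hx
    have key : m⁻¹ * (n * m) = n := by rw [hNc n hn m hm]; group
    have h2 : A.subtype (m⁻¹ * (n * m)) v = v := by
      rw [apply_mul, apply_mul, hfix]
      exact apply_inv m v
    rwa [key] at h2
  have hmapΔ1 : ∀ n ∈ N, ∀ x ∈ Δ1, A.subtype n x ∈ Δ1 := by
    intro n hn x hx
    obtain ⟨m, hm, rfl⟩ := hx
    exact ⟨n * m, N.mul_mem hn hm, (apply_mul n m u).symm ▸ rfl⟩
  by_cases hcase : v ∈ Δ1
  · -- Case 1 : N is vertex-transitive; derive d = 2, contradiction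
    obtain ⟨n₀, hn₀, hn₀u⟩ := hcase
    have htransV : ∀ w : V, w ∈ Δ1 := by
      intro w
      rcases hcover w with h | h
      · exact h
      · obtain ⟨m, hm, rfl⟩ := h
        exact ⟨m * n₀, N.mul_mem hm hn₀, by rw [apply_mul, hn₀u]⟩
    have hstab1 : ∀ n ∈ N, A.subtype n u = u → n = 1 := by
      intro n hn hu
      apply hNfree n hn
      rw [Sym2.map_pair_eq, hu, hfixu n hn hu v (htransV v)]
    have hb1 : Function.Bijective (fun n : ↥N => A.subtype (↑n : ↥A) u) := by
      constructor
      · intro n₁ n₂ h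
        simp only at h
        have hmem : (↑n₂ : ↥A)⁻¹ * ↑n₁ ∈ N := N.mul_mem (N.inv_mem n₂.2) n₁.2
        have hfix : A.subtype ((↑n₂ : ↥A)⁻¹ * ↑n₁) u = u := by
          rw [apply_mul, h]
          exact apply_inv _ u
        exact (Subtype.ext (inv_mul_eq_one.mp (hstab1 _ hmem hfix))).symm
      · intro w
        obtain ⟨n, hn, hw⟩ := htransV w
        exact ⟨⟨n, hn⟩, hw⟩
    have hb2 : Function.Bijective (fun n : ↥N =>
        (⟨Sym2.map (A.subtype (↑n : ↥A)) s(u,v), edge_map_mem huv⟩ : ↥Γ.edgeSet)) := by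
      constructor
      · intro n₁ n₂ h
        have h' : Sym2.map (A.subtype (↑n₁ : ↥A)) s(u,v) = Sym2.map (A.subtype (↑n₂ : ↥A)) s(u,v) :=
          congrArg Subtype.val h
        have hmem : (↑n₂ : ↥A)⁻¹ * ↑n₁ ∈ N := N.mul_mem (N.inv_mem n₂.2) n₁.2
        have hfix : Sym2.map (A.subtype ((↑n₂ : ↥A)⁻¹ * ↑n₁)) s(u,v) = s(u,v) := by
          rw [sym2_map_mul, h']
          exact sym2_map_inv_eq _ rfl
        exact (Subtype.ext (inv_mul_eq_one.mp (hNfree _ hmem hfix))).symm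
      · rintro ⟨e', he'⟩
        revert he'
        induction e' using Sym2.ind with
        | _ x y =>
        intro he'
        have hxy : Γ.Adj x y := Γ.mem_edgeSet.mp he'
        obtain ⟨n, hn, hc⟩ := hNtrans hxy
        exact ⟨⟨n, hn⟩, Subtype.ext (sym2_map_pair_eq_iff.mpr hc)⟩
    have hc1 : Nat.card ↥N = Nat.card V := Nat.card_eq_of_bijective _ hb1
    have hc2 : Nat.card ↥N = Nat.card ↥Γ.edgeSet := Nat.card_eq_of_bijective _ hb2
    have hsum : ∑ w : V, Γ.degree w = 2 * Γ.edgeFinset.card :=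
      Γ.sum_degrees_eq_twice_card_edges
    have hsum2 : ∑ w : V, Γ.degree w = Fintype.card V * d := by
      rw [Finset.sum_congr rfl (fun w _ => hreg w), Finset.sum_const, smul_eq_mul,
        Finset.card_univ]
    have hec : Γ.edgeFinset.card = Fintype.card ↥Γ.edgeSet := Set.toFinset_card _
    have hVpos : 0 < Fintype.card V := Fintype.card_pos_iff.mpr ⟨u⟩
    have hfin : Fintype.card V * d = Fintype.card V * 2 := by
      rw [← hsum2, hsum, hec, ← Nat.card_eq_fintype_card, ← hc2, hc1, Nat.card_eq_fintype_card,
        Nat.mul_comm]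
    have : d = 2 := Nat.eq_of_mul_eq_mul_left hVpos hfin
    omega
  · -- Case 2 : complete bipartite
    have hdisj : ∀ x, x ∈ Δ1 → x ∈ Δ2 → False := by
      intro x h1 h2
      obtain ⟨n, hn, hnu⟩ := h1
      obtain ⟨m, hm, hmv⟩ := h2
      apply hcase
      refine ⟨m⁻¹ * n, N.mul_mem (N.inv_mem hm) hn, ?_⟩
      rw [apply_mul, hnu, ← hmv, apply_inv]
    have hcross : ∀ ⦃x y⦄, Γ.Adj x y → (x ∈ Δ1 ∧ y ∈ Δ2) ∨ (x ∈ Δ2 ∧ y ∈ Δ1) := by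
      intro x y hxy
      obtain ⟨n, hn, hc⟩ := hNtrans hxy
      rcases hc with ⟨h1, h2⟩ | ⟨h1, h2⟩
      · exact Or.inl ⟨⟨n, hn, h1⟩, ⟨n, hn, h2⟩⟩
      · exact Or.inr ⟨⟨n, hn, h2⟩, ⟨n, hn, h1⟩⟩
    have hL1 : ∀ a a' w, a ∈ Δ1 → a' ∈ Δ1 → Γ.Adj a w → Γ.Adj a' w →
        ∀ b, Γ.Adj a b ↔ Γ.Adj a' b := by
      intro a a' w ha ha' haw ha'w
      have hwΔ2 : w ∈ Δ2 := by
        rcases hcross haw with ⟨_, h⟩ | ⟨h, _⟩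
        · exact h
        · exact (hdisj a ha h).elim
      obtain ⟨n₁, hn₁, hc₁⟩ := hNtrans haw
      obtain ⟨n₂, hn₂, hc₂⟩ := hNtrans ha'w
      have hnN : n₂ * n₁⁻¹ ∈ N := N.mul_mem hn₂ (N.inv_mem hn₁)
      have hmap : Sym2.map (A.subtype (n₂ * n₁⁻¹)) s(a,w) = s(a',w) := by
        rw [sym2_map_mul, sym2_map_inv_eq n₁ (sym2_map_pair_eq_iff.mpr hc₁)]
        exact sym2_map_pair_eq_iff.mpr hc₂
      have hna : A.subtype (n₂ * n₁⁻¹) a = a' ∧ A.subtype (n₂ * n₁⁻¹) w = w := by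
        rcases sym2_map_pair_eq_iff.mp hmap with h | ⟨h1, _⟩
        · exact h
        · exact ((fun hh => hdisj w hh hwΔ2) (h1 ▸ hmapΔ1 _ hnN a ha)).elim
      obtain ⟨hna', hnw⟩ := hna
      have hnv : A.subtype (n₂ * n₁⁻¹) v = v := hgetv _ hnN w hwΔ2 hnw
      have hfix2 : ∀ b ∈ Δ2, A.subtype (n₂ * n₁⁻¹) b = b := hfixv _ hnN hnv
      intro b
      constructor
      · intro hab
        have hbΔ2 : b ∈ Δ2 := by
          rcases hcross hab with ⟨_, h⟩ | ⟨h, _⟩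
          · exact h
          · exact (hdisj a ha h).elim
        have h2 := adj_apply (g := n₂ * n₁⁻¹) hab
        rwa [hna', hfix2 b hbΔ2] at h2
      · intro hab
        have hbΔ2 : b ∈ Δ2 := by
          rcases hcross hab with ⟨_, h⟩ | ⟨h, _⟩
          · exact h
          · exact (hdisj a' ha' h).elim
        have h2 := adj_apply (g := (n₂ * n₁⁻¹)⁻¹) hab
        rwa [apply_inv' _ hna', apply_inv' _ (hfix2 b hbΔ2)] at h2
    have hL2 : ∀ k, ∀ x y, ∀ p : Γ.Walk x y, p.length ≤ k → x ∈ Δ1 → y ∈ Δ1 →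
        ∀ b, Γ.Adj x b ↔ Γ.Adj y b := by
      intro k
      induction k using Nat.strong_induction_on with
      | _ k ih =>
      intro x y p hlen hx hy
      cases p with
      | nil => exact fun b => Iff.rfl
      | @cons _ z _ h q =>
        cases q with
        | nil =>
          rcases hcross h with ⟨_, h2⟩ | ⟨h2, _⟩
          · exact (hdisj y hy h2).elim
          · exact (hdisj x hx h2).elim
        | @cons _ z' _ h' r =>
          have hzΔ2 : z ∈ Δ2 := by
            rcases hcross h with ⟨_, h2⟩ | ⟨h2, _⟩
            · exact h2
            · exact (hdisj x hx h2).elim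
          have hz'Δ1 : z' ∈ Δ1 := by
            rcases hcross h' with ⟨h2, _⟩ | ⟨_, h2⟩
            · exact (hdisj z h2 hzΔ2).elim
            · exact h2
          simp only [SimpleGraph.Walk.length_cons] at hlen
          have hstep := hL1 x z' z hx hz'Δ1 h h'.symm
          have hrec := ih (k - 2) (by omega) z' y r (by omega) hz'Δ1 hy
          exact fun b => (hstep b).trans (hrec b)
    have hnbr : ∀ a ∈ Δ1, ∀ b, Γ.Adj a b ↔ Γ.Adj u b := by
      intro a ha b
      obtain ⟨p⟩ := hconn.preconnected a u
      exact hL2 p.length a u p le_rfl ha huΔ1 b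
    have hΔ2iff : ∀ b, b ∈ Δ2 ↔ Γ.Adj u b := by
      intro b
      constructor
      · intro hb
        have hdeg : 0 < (Γ.neighborFinset b).card := by
          rw [Γ.card_neighborFinset_eq_degree, hreg b]; omega
        obtain ⟨a, ha⟩ := Finset.card_pos.mp hdeg
        rw [SimpleGraph.mem_neighborFinset] at ha
        have haΔ1 : a ∈ Δ1 := by
          rcases hcross ha with ⟨hb1, _⟩ | ⟨_, h⟩
          · exact (hdisj b hb1 hb).elim
          · exact h
        exact (hnbr a haΔ1 b).mp ha.symm
      · intro hb
        rcases hcross hb with ⟨_, h⟩ | ⟨h, _⟩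
        · exact h
        · exact (hdisj u huΔ1 h).elim
    have hall : ∀ a ∈ Δ1, ∀ b ∈ Δ2, Γ.Adj a b := by
      intro a ha b hb
      exact (hnbr a ha b).mpr ((hΔ2iff b).mp hb)
    have hΔ1iff : ∀ a, a ∈ Δ1 ↔ Γ.Adj v a := by
      intro a
      constructor
      · intro ha
        exact (hall a ha v hvΔ2).symm
      · intro ha
        rcases hcross ha with ⟨h, _⟩ | ⟨_, h⟩
        · exact (hcase h).elim
        · exact h
    have hadj : ∀ x y, Γ.Adj x y ↔ ((x ∈ Δ1 ∧ y ∈ Δ2) ∨ (x ∈ Δ2 ∧ y ∈ Δ1)) := by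
      intro x y
      refine ⟨fun h => hcross h, ?_⟩
      rintro (⟨h1, h2⟩ | ⟨h1, h2⟩)
      · exact hall x h1 y h2
      · exact (hall y h2 x h1).symm
    have hΔ2eq : ∀ x, x ∈ Δ2 ↔ ¬ x ∈ Δ1 :=
      fun x => ⟨fun h h1 => hdisj x h1 h, fun h => (hcover x).resolve_left h⟩
    haveI : DecidablePred (· ∈ Δ1) := Classical.decPred _
    have hcard1 : Fintype.card {x // x ∈ Δ1} = d := by
      have e : {x // x ∈ Δ1} ≃ {x // x ∈ Γ.neighborSet v} :=
        Equiv.subtypeEquivRight (fun x => by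
          rw [SimpleGraph.mem_neighborSet]
          exact hΔ1iff x)
      rw [Fintype.card_congr e, Γ.card_neighborSet_eq_degree, hreg v]
    have hcard2 : Fintype.card {x // ¬ x ∈ Δ1} = d := by
      have e : {x // ¬ x ∈ Δ1} ≃ {x // x ∈ Γ.neighborSet u} :=
        Equiv.subtypeEquivRight (fun x => by
          rw [SimpleGraph.mem_neighborSet]
          exact ((hΔ2eq x).symm).trans (hΔ2iff x))
      rw [Fintype.card_congr e, Γ.card_neighborSet_eq_degree, hreg u]
    apply hnotbip
    let e1 : {x // x ∈ Δ1} ≃ Fin d := Fintype.equivFinOfCardEq hcard1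
    let e2 : {x // ¬ x ∈ Δ1} ≃ Fin d := Fintype.equivFinOfCardEq hcard2
    let F : V ≃ (Fin d ⊕ Fin d) := (Equiv.sumCompl (· ∈ Δ1)).symm.trans (Equiv.sumCongr e1 e2)
    refine ⟨⟨F, ?_⟩⟩
    intro x y
    have hFx : ∀ w : V, ∀ hw : w ∈ Δ1, F w = Sum.inl (e1 ⟨w, hw⟩) := by
      intro w hw
      simp only [F, Equiv.trans_apply, Equiv.sumCompl_symm_apply_of_pos hw,
        Equiv.sumCongr_apply, Sum.map_inl]
    have hFx' : ∀ w : V, ∀ hw : ¬ w ∈ Δ1, F w = Sum.inr (e2 ⟨w, hw⟩) := by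
      intro w hw
      simp only [F, Equiv.trans_apply, Equiv.sumCompl_symm_apply_of_neg hw,
        Equiv.sumCongr_apply, Sum.map_inr]
    show (completeBipartiteGraph (Fin d) (Fin d)).Adj (F x) (F y) ↔ Γ.Adj x y
    have cll : ∀ a b : Fin d, ¬ (completeBipartiteGraph (Fin d) (Fin d)).Adj (Sum.inl a) (Sum.inl b) := by
      simp [completeBipartiteGraph]
    have clr : ∀ a b : Fin d, (completeBipartiteGraph (Fin d) (Fin d)).Adj (Sum.inl a) (Sum.inr b) := by
      simp [completeBipartiteGraph]
    have crl : ∀ a b : Fin d, (completeBipartiteGraph (Fin d) (Fin d)).Adj (Sum.inr a) (Sum.inl b) := by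
      simp [completeBipartiteGraph]
    have crr : ∀ a b : Fin d, ¬ (completeBipartiteGraph (Fin d) (Fin d)).Adj (Sum.inr a) (Sum.inr b) := by
      simp [completeBipartiteGraph]
    rw [hadj x y]
    by_cases hx : x ∈ Δ1 <;> by_cases hy : y ∈ Δ1
    · rw [hFx x hx, hFx y hy]
      refine iff_of_false (cll _ _) ?_
      rintro (⟨_, h⟩ | ⟨h, _⟩)
      · exact hdisj y hy h
      · exact hdisj x hx h
    · rw [hFx x hx, hFx' y hy]
      exact iff_of_true (clr _ _) (Or.inl ⟨hx, (hΔ2eq y).mpr hy⟩)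
    · rw [hFx' x hx, hFx y hy]
      exact iff_of_true (crl _ _) (Or.inr ⟨(hΔ2eq x).mpr hx, hy⟩)
    · rw [hFx' x hx, hFx' y hy]
      refine iff_of_false (crr _ _) ?_
      rintro (⟨h, _⟩ | ⟨_, h⟩)
      · exact hx h
      · exact hy h
end LemmaA
section Part1

open SimpleGraph Subgroup
open scoped commutatorElement

lemma isSolvable_of_coatom_bot {H : Type*} [Group H] (h : IsCoatom (⊥ : Subgroup H)) :
    IsSolvable H := by
  apply isSolvable_of_comm
  intro a b
  by_cases ha : a = 1
  · subst ha; rw [one_mul, mul_one]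
  · have hz : Subgroup.zpowers a = ⊤ :=
      h.2 _ (bot_lt_iff_ne_bot.mpr (fun hh => ha (Subgroup.zpowers_eq_bot.mp hh)))
    have hb : b ∈ Subgroup.zpowers a := hz ▸ Subgroup.mem_top b
    obtain ⟨k, rfl⟩ := Subgroup.mem_zpowers_iff.mp hb
    exact ((Commute.refl a).zpow_right k).eq

theorem not_solvable_main {V : Type*} [Fintype V] {Γ : SimpleGraph V} [DecidableRel Γ.Adj]
    {d : ℕ} (hd : 3 ≤ d) (hconn : Γ.Connected) (hreg : Γ.IsRegularOfDegree d)
    {A : Subgroup (Γ ≃g Γ)} (hprim : IsEdgePrimitive Γ A.subtype)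
    (hnotbip : ¬ Nonempty (Γ ≃g completeBipartiteGraph (Fin d) (Fin d))) :
    ¬ IsSolvable ↥A := by
  intro hsolv
  obtain ⟨e, he⟩ := hprim.1.1
  have hcoatom := hprim.2 e he
  haveI : DecidablePred (fun n => derivedSeries ↥A n = ⊥) := Classical.decPred _
  have hex : ∃ n, derivedSeries ↥A n = ⊥ := hsolv.solvable
  set k := Nat.find hex with hk
  have hspec : derivedSeries ↥A k = ⊥ := Nat.find_spec hex
  match hk2 : k with
  | 0 =>
    rw [derivedSeries_zero] at hspec
    exact hcoatom.1 (le_antisymm le_top (hspec.le.trans bot_le))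
  | (j+1) =>
    have hNn : (derivedSeries ↥A j).Normal := derivedSeries_normal _ _
    have hNc : ∀ x ∈ derivedSeries ↥A j, ∀ y ∈ derivedSeries ↥A j, x * y = y * x := by
      intro x hx y hy
      have hcomm : ⁅x, y⁆ ∈ derivedSeries ↥A (j+1) := by
        rw [derivedSeries_succ]
        exact Subgroup.commutator_mem_commutator hx hy
      rw [hspec] at hcomm
      exact (commutatorElement_eq_one_iff_commute.mp (Subgroup.mem_bot.mp hcomm)).eq
    have hbot := normal_comm_eq_bot hd hconn hreg hprim hnotbip hNn hNc
    have := Nat.find_min hex (m := j) (by omega)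
    exact this hbot

end Part1
section GroupAux

variable {G : Type*} [Group G]

lemma comm_le_normalizer {K H : Subgroup G} (hcK : ∀ x ∈ K, ∀ y ∈ K, x * y = y * x)
    (hHK : H ≤ K) : K ≤ Subgroup.normalizer (H : Set G) := by
  intro k hk
  rw [Subgroup.mem_normalizer_iff]
  intro h
  constructor
  · intro hh
    have hc : k * h = h * k := hcK k hk h (hHK hh)
    have heq : k * h * k⁻¹ = h := by rw [hc]; group
    rwa [heq]
  · intro hh
    have hx : k * h * k⁻¹ ∈ K := hHK hh
    have hc : k * (k * h * k⁻¹) = (k * h * k⁻¹) * k := hcK k hk _ hx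
    have h3 : (k * h * k⁻¹) * k = k * h := by group
    have h4 : k * (k * h * k⁻¹) = k * h := by rw [hc, h3]
    have h5 : k * h * k⁻¹ = h := mul_left_cancel h4
    rwa [h5] at hh

lemma derivedSeries_le_of_solvable_quotient (N : Subgroup G) [N.Normal]
    (h : IsSolvable (G ⧸ N)) : ∃ m, derivedSeries G m ≤ N := by
  obtain ⟨m, hm⟩ := h.solvable
  refine ⟨m, fun g hg => ?_⟩
  have h1 : (QuotientGroup.mk' N) g ∈ (derivedSeries G m).map (QuotientGroup.mk' N) :=
    ⟨g, hg, rfl⟩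
  have h2 := map_derivedSeries_le_derivedSeries (QuotientGroup.mk' N) m h1
  rw [hm] at h2
  have h3 : (QuotientGroup.mk' N) g = 1 := Subgroup.mem_bot.mp h2
  exact (QuotientGroup.eq_one_iff g).mp h3

lemma derivedSeries_le_self_succ (n : ℕ) : derivedSeries G (n + 1) ≤ derivedSeries G n := by
  rw [derivedSeries_succ]
  rw [Subgroup.commutator_le]
  intro g1 h1 g2 h2
  exact (derivedSeries G n).mul_mem (((derivedSeries G n).mul_mem
    (((derivedSeries G n).mul_mem h1 h2)) ((derivedSeries G n).inv_mem h1)))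
    ((derivedSeries G n).inv_mem h2)

lemma derivedSeries_le_of_le {m n : ℕ} (h : m ≤ n) :
    derivedSeries G n ≤ derivedSeries G m := by
  induction n with
  | zero => rw [Nat.le_zero.mp h]
  | succ k ih =>
    rcases Nat.lt_or_ge m (k+1) with hlt | hge
    · exact (derivedSeries_le_self_succ k).trans (ih (by omega))
    · rw [Nat.le_antisymm h hge]

lemma isSolvable_of_finset_inf (s : Finset ℕ) (f : ℕ → Subgroup G)
    (h : ∀ p ∈ s, ∃ m, derivedSeries G m ≤ f p)
    (hbot : (⨅ p ∈ s, f p) = ⊥) : IsSolvable G := by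
  classical
  have key : ∃ m, ∀ p ∈ s, derivedSeries G m ≤ f p := by
    clear hbot
    induction s using Finset.induction_on with
    | empty => exact ⟨0, fun p hp => absurd hp (Finset.notMem_empty p)⟩
    | @insert a t hat ih =>
      obtain ⟨m1, hm1⟩ := ih (fun p hp => h p (Finset.mem_insert_of_mem hp))
      obtain ⟨m2, hm2⟩ := h a (Finset.mem_insert_self a t)
      refine ⟨max m1 m2, fun p hp => ?_⟩
      rcases Finset.mem_insert.mp hp with rfl | hp'
      · exact (derivedSeries_le_of_le (le_max_right m1 m2)).trans hm2
      · exact (derivedSeries_le_of_le (le_max_left m1 m2)).trans (hm1 p hp')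
  obtain ⟨m, hm⟩ := key
  refine ⟨⟨m, ?_⟩⟩
  rw [← le_bot_iff, ← hbot, le_iInf_iff]
  intro p
  rw [le_iInf_iff]
  intro hp
  exact hm p hp

end GroupAux
section Part2

open SimpleGraph Subgroup Pointwise

set_option maxHeartbeats 2000000 in
theorem estab_not_comm {V : Type*} [Fintype V] {Γ : SimpleGraph V} [DecidableRel Γ.Adj]
    {d : ℕ} (hd : 3 ≤ d) (hconn : Γ.Connected) (hreg : Γ.IsRegularOfDegree d)
    {A : Subgroup (Γ ≃g Γ)} (hprim : IsEdgePrimitive Γ A.subtype)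
    (hnotbip : ¬ Nonempty (Γ ≃g completeBipartiteGraph (Fin d) (Fin d))) :
    ∀ e ∈ Γ.edgeSet, ¬ (∀ x y : ↥(eStab Γ A.subtype e), x * y = y * x) := by
  have hns : ¬ IsSolvable ↥A := not_solvable_main hd hconn hreg hprim hnotbip
  haveI hfinAut : Finite (Γ ≃g Γ) :=
    Finite.of_injective (fun f => (f : V → V)) (fun f g h => RelIso.ext (congrFun h))
  intro e he hab
  revert he hab
  induction e using Sym2.ind with
  | _ u v =>
  intro he hab
  have huv : Γ.Adj u v := Γ.mem_edgeSet.mp he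
  set M := eStab Γ A.subtype s(u,v) with hMdef
  have hcomm : ∀ x ∈ M, ∀ y ∈ M, x * y = y * x := by
    intro x hx y hy
    exact Subtype.ext_iff.mp (hab ⟨x, hx⟩ ⟨y, hy⟩)
  have hcoatom : IsCoatom M := hprim.2 s(u,v) he
  have hMne : M ≠ ⊥ := fun h => hns (isSolvable_of_coatom_bot (h ▸ hcoatom))
  -- no nontrivial normal subgroup inside M
  have hnormal_le : ∀ H : Subgroup ↥A, H.Normal → H ≤ M → H = ⊥ := by
    intro H hHn hle
    rw [Subgroup.eq_bot_iff_forall]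
    intro n hn
    apply eq_one_of_forall_fixed hd hreg
    intro x y hxy
    obtain ⟨g, hg⟩ := exists_map_pair hprim.1 huv hxy
    have hg' : Sym2.map (A.subtype g) s(u,v) = s(x,y) := sym2_map_pair_eq_iff.mpr hg
    have hmem : g⁻¹ * n * g ∈ H := by
      have := hHn.conj_mem n hn g⁻¹
      rwa [inv_inv] at this
    have hfix : Sym2.map (A.subtype (g⁻¹ * n * g)) s(u,v) = s(u,v) := hle hmem
    calc Sym2.map (A.subtype n) s(x,y)
        = Sym2.map (A.subtype (n * g)) s(u,v) := by rw [sym2_map_mul, hg']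
      _ = Sym2.map (A.subtype (g * (g⁻¹ * n * g))) s(u,v) := by
          rw [show n * g = g * (g⁻¹ * n * g) by group]
      _ = s(x,y) := by rw [sym2_map_mul, hfix, hg']
  -- normalizers of nontrivial subgroups of M
  have hnormalizer : ∀ H : Subgroup ↥A, H ≠ ⊥ → H ≤ M → normalizer (H : Set ↥A) = M := by
    intro H hne hle
    have hMleN : M ≤ normalizer (H : Set ↥A) := comm_le_normalizer hcomm hle
    by_cases hNM : normalizer (H : Set ↥A) = M
    · exact hNM
    · have htop : normalizer (H : Set ↥A) = ⊤ :=
        hcoatom.2 _ (lt_of_le_of_ne hMleN (fun hh => hNM hh.symm))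
      exact absurd (hnormal_le H (Subgroup.normalizer_eq_top_iff.mp htop) hle) hne
  -- trivial intersection property
  have hTI : ∀ g : ↥A, g ∉ M → M ⊓ Subgroup.map (MulAut.conj g).toMonoidHom M = ⊥ := by
    intro g hg
    by_contra hne
    have hcommMg : ∀ x ∈ Subgroup.map (MulAut.conj g).toMonoidHom M,
        ∀ y ∈ Subgroup.map (MulAut.conj g).toMonoidHom M, x * y = y * x := by
      intro x hx y hy
      obtain ⟨a, ha, rfl⟩ := hx
      obtain ⟨b, hb, rfl⟩ := hy
      rw [← map_mul, ← map_mul, hcomm a ha b hb]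
    have h2 : Subgroup.map (MulAut.conj g).toMonoidHom M ≤
        normalizer ((M ⊓ Subgroup.map (MulAut.conj g).toMonoidHom M : Subgroup ↥A) : Set ↥A) :=
      comm_le_normalizer hcommMg inf_le_right
    rw [hnormalizer (M ⊓ Subgroup.map (MulAut.conj g).toMonoidHom M) hne inf_le_left] at h2
    have hcard : Nat.card ↥(Subgroup.map (MulAut.conj g).toMonoidHom M) = Nat.card ↥M :=
      (Nat.card_congr (Subgroup.equivMapOfInjective M _ (MulAut.conj g).injective).toEquiv).symm
    have hMgM : Subgroup.map (MulAut.conj g).toMonoidHom M = M :=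
      Subgroup.eq_of_le_of_card_ge h2 (le_of_eq hcard.symm)
    have hgN : g ∈ normalizer (M : Set ↥A) := by
      rw [Subgroup.mem_normalizer_iff]
      intro h
      constructor
      · intro hh
        have hmem : g * h * g⁻¹ ∈ Subgroup.map (MulAut.conj g).toMonoidHom M := ⟨h, hh, rfl⟩
        rwa [hMgM] at hmem
      · intro hh
        have hmem : g * h * g⁻¹ ∈ Subgroup.map (MulAut.conj g).toMonoidHom M :=
          hMgM.symm ▸ hh
        obtain ⟨m, hm, hme⟩ := hmem
        have hme' : g * m * g⁻¹ = g * h * g⁻¹ := hme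
        have : m = h := mul_left_cancel (mul_right_cancel hme')
        rwa [← this]
    rw [hnormalizer M hMne le_rfl] at hgN
    exact hg hgN
  have hTIelem : ∀ k : ↥A, k ∉ M → ∀ m ∈ M, m * k = k * m → m = 1 := by
    intro k hk m hm hc
    have hmem : m ∈ Subgroup.map (MulAut.conj k).toMonoidHom M := by
      refine ⟨m, hm, ?_⟩
      show k * m * k⁻¹ = m
      rw [← hc]
      exact mul_inv_cancel_right m k
    have hmb : m ∈ M ⊓ Subgroup.map (MulAut.conj k).toMonoidHom M := ⟨hm, hmem⟩
    rw [hTI k hk] at hmb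
    exact Subgroup.mem_bot.mp hmb
  by_cases hswap : ∃ t ∈ M, A.subtype t u = v
  · -- arc-reversing case : find involution, Burnside transfer, abelian normal subgroup
    obtain ⟨t, htM, htu⟩ := hswap
    have htv : A.subtype t v = u := by
      rcases sym2_map_pair_eq_iff.mp (mem_eStab_iff.mp htM) with ⟨h1, _⟩ | ⟨_, h2⟩
      · exact absurd (h1.symm.trans htu) huv.ne
      · exact h2
    -- construct an involution τ ∈ M
    obtain ⟨τ, hτM, hτ2, hτne⟩ : ∃ τ, τ ∈ M ∧ τ * τ = 1 ∧ τ ≠ 1 := by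
      have ht2 : A.subtype (t * t) u = u := by rw [apply_mul, htu, htv]
      have htpow : ∀ j : ℕ, A.subtype (t ^ (2 * j)) u = u := by
        intro j
        induction j with
        | zero => simp [subtype_one_apply]
        | succ j ih =>
          rw [show 2 * (j + 1) = 2 * j + 2 from by omega, pow_add, apply_mul, pow_two, ht2, ih]
      have hordne : orderOf t ≠ 0 := (orderOf_pos t).ne'
      have hodd : ¬ Odd (orderOf t) := by
        rintro ⟨j, hj⟩
        have h2 : A.subtype (t ^ (2 * (j + 1))) u = u := htpow (j + 1)
        have h3 : t ^ (2 * (j + 1)) = t := by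
          rw [show 2 * (j + 1) = (2 * j + 1) + 1 from by omega, pow_succ, ← hj,
            pow_orderOf_eq_one, one_mul]
        rw [h3, htu] at h2
        exact huv.ne' h2
      obtain ⟨j', hj'⟩ : ∃ j', orderOf t = 2 * j' := by
        obtain ⟨r, hr⟩ := Nat.not_odd_iff_even.mp hodd
        exact ⟨r, by omega⟩
      have hj0 : j' ≠ 0 := by
        intro h0
        rw [h0] at hj'
        exact hordne (by omega)
      refine ⟨t ^ j', M.pow_mem htM j', ?_, ?_⟩
      · rw [← pow_add, show j' + j' = 2 * j' from by omega, ← hj', pow_orderOf_eq_one]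
      · intro h
        have hdvd := orderOf_dvd_of_pow_eq_one h
        rcases hdvd with ⟨c, hc⟩
        rw [hj'] at hc
        rcases Nat.eq_zero_or_pos c with rfl | hcpos
        · omega
        · have : 2 * j' ≤ 2 * j' * c := Nat.le_mul_of_pos_right _ hcpos
          omega
    -- per-prime normal complements
    have hKp : ∀ p : ℕ, ∃ K : Subgroup ↥A, K.Normal ∧ (∃ m, derivedSeries ↥A m ≤ K) ∧
        (p ∈ (Nat.card ↥M).primeFactors → ¬ p ∣ Nat.card K) := by
      intro p
      by_cases hpS : p ∈ (Nat.card ↥M).primeFactors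
      · obtain ⟨hp, hpdvd, -⟩ := Nat.mem_primeFactors.mp hpS
        haveI : Fact p.Prime := ⟨hp⟩
        letI : CommGroup ↥M := { (inferInstance : Group ↥M) with mul_comm := hab }
        obtain ⟨P₀⟩ : Nonempty (Sylow p ↥M) := inferInstance
        have hPle : Subgroup.map M.subtype (P₀ : Subgroup ↥M) ≤ M := Subgroup.map_subtype_le _
        have hPp : IsPGroup p (Subgroup.map M.subtype (P₀ : Subgroup ↥M)) :=
          P₀.2.map M.subtype
        have hLp : ∀ x : ↥A, x ∈ M → (∃ k : ℕ, x ^ (p ^ k) = 1) →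
            x ∈ Subgroup.map M.subtype (P₀ : Subgroup ↥M) := by
          rintro x hx ⟨k, hk⟩
          have hyk : (⟨x, hx⟩ : ↥M) ^ (p ^ k) = 1 := by
            apply Subtype.ext
            push_cast
            exact hk
          have hzp : IsPGroup p (Subgroup.zpowers (⟨x, hx⟩ : ↥M)) := by
            obtain ⟨m, hmle, hordeq⟩ := (Nat.dvd_prime_pow hp).mp (orderOf_dvd_of_pow_eq_one hyk)
            exact IsPGroup.of_card (by rw [Nat.card_zpowers, hordeq])
          have hsup : ((P₀ : Subgroup ↥M) ⊔ Subgroup.zpowers (⟨x, hx⟩ : ↥M)) = (P₀ : Subgroup ↥M) :=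
            P₀.3 (IsPGroup.to_sup_of_normal_right P₀.2 hzp) le_sup_left
          have hyP₀ : (⟨x, hx⟩ : ↥M) ∈ (P₀ : Subgroup ↥M) := by
            rw [← hsup]
            exact Subgroup.mem_sup_right (Subgroup.mem_zpowers _)
          exact ⟨⟨x, hx⟩, hyP₀, rfl⟩
        have hPne : Subgroup.map M.subtype (P₀ : Subgroup ↥M) ≠ ⊥ := by
          haveI : Fintype ↥M := Fintype.ofFinite _
          obtain ⟨z, hz⟩ := exists_prime_orderOf_dvd_card (G := ↥M) p
            (by rwa [← Nat.card_eq_fintype_card])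
          have hzM : (↑z : ↥A) ∈ M := z.2
          have hz1 : z ^ p = 1 := by rw [← hz]; exact pow_orderOf_eq_one z
          have hzpow : (↑z : ↥A) ^ (p ^ 1) = 1 := by
            rw [pow_one]
            exact_mod_cast congrArg Subtype.val hz1
          have hzP := hLp _ hzM ⟨1, hzpow⟩
          intro hPbot
          rw [hPbot] at hzP
          have hzone : z = 1 := Subtype.ext (Subgroup.mem_bot.mp hzP)
          rw [hzone, orderOf_one] at hz
          exact hp.one_lt.ne' hz.symm
        have hPmax : ∀ {Q : Subgroup ↥A}, IsPGroup p Q →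
            Subgroup.map M.subtype (P₀ : Subgroup ↥M) ≤ Q →
            Q = Subgroup.map M.subtype (P₀ : Subgroup ↥M) := by
          intro Q hQ hPQ
          by_contra hQP
          have hHne : (Subgroup.map M.subtype (P₀ : Subgroup ↥M)).subgroupOf Q ≠ ⊤ := by
            intro h
            exact hQP (le_antisymm (Subgroup.subgroupOf_eq_top.mp h) hPQ)
          haveI : Group.IsNilpotent ↥Q := hQ.isNilpotent
          have hnc : NormalizerCondition ↥Q := normalizerCondition_of_isNilpotent
          obtain ⟨x, hxn, hxH⟩ := SetLike.exists_of_lt (hnc _ (lt_top_iff_ne_top.mpr hHne))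
          have hxnorm : (↑x : ↥A) ∈ normalizer ((Subgroup.map M.subtype (P₀ : Subgroup ↥M) : Subgroup ↥A) : Set ↥A) := by
            rw [Subgroup.mem_normalizer_iff]
            intro h
            constructor
            · intro hh
              have hhQ : h ∈ Q := hPQ hh
              have h1 : (⟨h, hhQ⟩ : ↥Q) ∈
                  (Subgroup.map M.subtype (P₀ : Subgroup ↥M)).subgroupOf Q := by
                rwa [Subgroup.mem_subgroupOf]
              have h2 := (Subgroup.mem_normalizer_iff.mp hxn ⟨h, hhQ⟩).mp h1
              rw [Subgroup.mem_subgroupOf] at h2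
              exact h2
            · intro hh
              have hh'' : (⟨↑x * h * (↑x)⁻¹, hPQ hh⟩ : ↥Q) ∈
                  (Subgroup.map M.subtype (P₀ : Subgroup ↥M)).subgroupOf Q := by
                rwa [Subgroup.mem_subgroupOf]
              have hgH := (Subgroup.mem_normalizer_iff.mp hxn
                (x⁻¹ * ⟨↑x * h * (↑x)⁻¹, hPQ hh⟩ * x)).mpr (by
                  have heq2 : x * (x⁻¹ * (⟨↑x * h * (↑x)⁻¹, hPQ hh⟩ : ↥Q) * x) * x⁻¹
                      = (⟨↑x * h * (↑x)⁻¹, hPQ hh⟩ : ↥Q) := by group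
                  rw [heq2]
                  exact hh'')
              rw [Subgroup.mem_subgroupOf] at hgH
              have hcoe : ((x⁻¹ * (⟨↑x * h * (↑x)⁻¹, hPQ hh⟩ : ↥Q) * x : ↥Q) : ↥A) = h := by
                push_cast
                group
              rwa [hcoe] at hgH
          rw [hnormalizer _ hPne hPle] at hxnorm
          obtain ⟨k, hk⟩ := hQ x
          have hxP := hLp _ hxnorm ⟨k, by exact_mod_cast congrArg Subtype.val hk⟩
          exact hxH (by rwa [Subgroup.mem_subgroupOf])
        haveI : Finite (Subgroup ↥A) :=
          Finite.of_injective (fun H : Subgroup ↥A => (H : Set ↥A)) SetLike.coe_injective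
        haveI : Finite (Sylow p ↥A) :=
          Finite.of_injective (fun P : Sylow p ↥A => (P : Subgroup ↥A)) (fun P R h => Sylow.ext h)
        let PS : Sylow p ↥A := ⟨Subgroup.map M.subtype (P₀ : Subgroup ↥M), hPp, hPmax⟩
        have hPcent : normalizer ((PS : Subgroup ↥A) : Set ↥A) ≤ Subgroup.centralizer (PS : Set ↥A) := by
          have h1 : normalizer ((PS : Subgroup ↥A) : Set ↥A) = M := hnormalizer _ hPne hPle
          rw [h1]
          intro m hm
          rw [Subgroup.mem_centralizer_iff]
          intro h hh
          exact hcomm h (hPle hh) m hm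
        refine ⟨(MonoidHom.transferSylow PS hPcent).ker, inferInstance, ?_, fun _ =>
          MonoidHom.not_dvd_card_ker_transferSylow PS hPcent⟩
        apply derivedSeries_le_of_solvable_quotient
        haveI : Group.IsNilpotent ↥(PS : Subgroup ↥A) := hPp.isNilpotent
        have hcompl := MonoidHom.ker_transferSylow_isComplement' PS hPcent
        apply solvable_of_surjective
          (f := (QuotientGroup.mk' (MonoidHom.transferSylow PS hPcent).ker).comp
            (PS : Subgroup ↥A).subtype)
        intro q
        obtain ⟨g, rfl⟩ := QuotientGroup.mk'_surjective _ q
        have hg : g ∈ ((MonoidHom.transferSylow PS hPcent).ker : Set ↥A) *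
            ((PS : Subgroup ↥A) : Set ↥A) := by
          rw [← Subgroup.normal_mul, hcompl.sup_eq_top]
          simp
        obtain ⟨a, ha, b, hb, rfl⟩ := hg
        refine ⟨⟨b, hb⟩, ?_⟩
        show QuotientGroup.mk' _ b = QuotientGroup.mk' _ (a * b)
        rw [map_mul, show (QuotientGroup.mk' (MonoidHom.transferSylow PS hPcent).ker) a = 1 from
          (QuotientGroup.eq_one_iff a).mpr ha, one_mul]
      · exact ⟨⊤, inferInstance, ⟨0, le_top⟩, fun h => absurd h hpS⟩
    choose K hKn hKs hKd using hKp
    set S := (Nat.card ↥M).primeFactors with hSdef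
    have hKinfN : ((⨅ p ∈ S, K p) : Subgroup ↥A).Normal := by
      refine ⟨fun x hx g => ?_⟩
      simp only [Subgroup.mem_iInf] at hx ⊢
      intro p hp
      exact (hKn p).conj_mem _ (hx p hp) g
    have hMcard : Nat.card ↥M ≠ 0 := Nat.card_pos.ne'
    have hMcapK : ∀ m ∈ M, m ∈ ((⨅ p ∈ S, K p) : Subgroup ↥A) → m = 1 := by
      intro m hmM hmK
      simp only [Subgroup.mem_iInf] at hmK
      have hord1 : orderOf m = 1 := by
        rw [Nat.eq_one_iff_not_exists_prime_dvd]
        intro p hp hpdvd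
        have hpS : p ∈ S := Nat.mem_primeFactors.mpr
          ⟨hp, dvd_trans hpdvd (Subgroup.orderOf_dvd_natCard M hmM), hMcard⟩
        exact hKd p hpS (dvd_trans hpdvd (Subgroup.orderOf_dvd_natCard (K p) (hmK p hpS)))
      exact orderOf_eq_one_iff.mp hord1
    -- conjugation by τ is a fixed-point-free involution on the intersection
    have hKcomm : ∀ x ∈ ((⨅ p ∈ S, K p) : Subgroup ↥A),
        ∀ y ∈ ((⨅ p ∈ S, K p) : Subgroup ↥A), x * y = y * x := by
      have hconj : ∀ x ∈ ((⨅ p ∈ S, K p) : Subgroup ↥A),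
          τ * x * τ⁻¹ ∈ ((⨅ p ∈ S, K p) : Subgroup ↥A) := fun x hx => hKinfN.conj_mem x hx τ
      set KK := ((⨅ p ∈ S, K p) : Subgroup ↥A) with hKKdef
      let σ : ↥KK →* ↥KK :=
        { toFun := fun k => ⟨τ * ↑k * τ⁻¹, hconj _ k.2⟩
          map_one' := by
            apply Subtype.ext
            simp
          map_mul' := by
            intro a b
            apply Subtype.ext
            show τ * ↑(a * b) * τ⁻¹ = (τ * ↑a * τ⁻¹) * (τ * ↑b * τ⁻¹)
            push_cast
            group }
      have hτinv : τ⁻¹ = τ := inv_eq_of_mul_eq_one_right hτ2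
      have hinvol : Function.Involutive σ := by
        intro k
        apply Subtype.ext
        show τ * (τ * ↑k * τ⁻¹) * τ⁻¹ = ↑k
        rw [show τ * (τ * ↑k * τ⁻¹) * τ⁻¹ = (τ * τ) * ↑k * ((τ * τ)⁻¹) from by group, hτ2]
        group
      have hfpf : MonoidHom.FixedPointFree σ := by
        intro k hk
        have hcv : τ * ↑k * τ⁻¹ = (↑k : ↥A) := Subtype.ext_iff.mp hk
        have hc : τ * ↑k = ↑k * τ := by
          have := congrArg (fun z => z * τ) hcv
          simpa [mul_assoc] using this
        by_cases hkM : (↑k : ↥A) ∈ M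
        · exact Subtype.ext (hMcapK _ hkM k.2)
        · exact absurd (hTIelem _ hkM τ hτM hc) hτne
      intro x hx y hy
      exact Subtype.ext_iff.mp (hfpf.commute_all_of_involutive hinvol ⟨x, hx⟩ ⟨y, hy⟩)
    have hKbot := normal_comm_eq_bot hd hconn hreg hprim hnotbip hKinfN hKcomm
    exact hns (isSolvable_of_finset_inf S K (fun p _ => hKs p) hKbot)
  · -- no arc-reversal : all vertex stabilizers coincide, contradiction
    have hfixall : ∀ m ∈ M, A.subtype m u = u ∧ A.subtype m v = v := by
      intro m hm
      rcases sym2_map_pair_eq_iff.mp (mem_eStab_iff.mp hm) with h | ⟨h1, _⟩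
      · exact h
      · exact absurd ⟨m, hm, h1⟩ hswap
    have hnext : ∀ (z x0 : V), ∃ w, Γ.Adj z w ∧ w ≠ x0 := by
      intro z x0
      have hcard : 1 < (Γ.neighborFinset z).card := by
        rw [Γ.card_neighborFinset_eq_degree, hreg z]; omega
      obtain ⟨a, ha, b, hb, hne⟩ := Finset.one_lt_card.mp hcard
      rw [SimpleGraph.mem_neighborFinset] at ha hb
      by_cases h : a = x0
      · exact ⟨b, hb, fun hh => hne (h.trans hh.symm)⟩
      · exact ⟨a, ha, h⟩
    obtain ⟨w, hvw, hwu⟩ := hnext v u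
    have hUne : vStab Γ A.subtype u ≠ ⊤ := by
      obtain ⟨g, hg⟩ := exists_map_pair hprim.1 huv hvw
      intro htop
      have hgu : A.subtype g u = u := by
        have : g ∈ vStab Γ A.subtype u := by rw [htop]; exact Subgroup.mem_top g
        exact this
      rcases hg with ⟨h1, _⟩ | ⟨h1, _⟩
      · exact huv.ne (hgu.symm.trans h1)
      · exact hwu (hgu.symm.trans h1).symm
    obtain ⟨w', huw', hw'v⟩ := hnext u v
    have hVne : vStab Γ A.subtype v ≠ ⊤ := by
      obtain ⟨g, hg⟩ := exists_map_pair hprim.1 huv huw'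
      intro htop
      have hgv : A.subtype g v = v := by
        have : g ∈ vStab Γ A.subtype v := by rw [htop]; exact Subgroup.mem_top g
        exact this
      rcases hg with ⟨_, h2⟩ | ⟨_, h2⟩
      · exact hw'v (hgv.symm.trans h2).symm
      · exact huv.ne' (hgv.symm.trans h2)
    have hMleU : M ≤ vStab Γ A.subtype u := fun m hm => (hfixall m hm).1
    have hMleV : M ≤ vStab Γ A.subtype v := fun m hm => (hfixall m hm).2
    have hUeq : vStab Γ A.subtype u = M := by
      by_contra hne
      exact hUne (hcoatom.2 _ (lt_of_le_of_ne hMleU (fun hh => hne hh.symm)))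
    have hVeq : vStab Γ A.subtype v = M := by
      by_contra hne
      exact hVne (hcoatom.2 _ (lt_of_le_of_ne hMleV (fun hh => hne hh.symm)))
    have hmemiff : ∀ (g : ↥A) (z : V) (h : ↥A), h ∈ vStab Γ A.subtype (A.subtype g z) ↔
        g⁻¹ * h * g ∈ vStab Γ A.subtype z := by
      intro g z h
      constructor
      · intro hh
        have hh' : A.subtype h (A.subtype g z) = A.subtype g z := hh
        show A.subtype (g⁻¹ * h * g) z = z
        rw [apply_mul, apply_mul, hh']
        exact apply_inv g z
      · intro hh
        have hh' : A.subtype (g⁻¹ * h * g) z = z := hh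
        show A.subtype h (A.subtype g z) = A.subtype g z
        calc A.subtype h (A.subtype g z) = A.subtype (h * g) z := (apply_mul h g z).symm
          _ = A.subtype (g * (g⁻¹ * h * g)) z := by rw [show h * g = g * (g⁻¹ * h * g) by group]
          _ = A.subtype g (A.subtype (g⁻¹ * h * g) z) := apply_mul _ _ _
          _ = A.subtype g z := by rw [hh']
    have hkey : ∀ (g : ↥A) (x y : V), vStab Γ A.subtype x = vStab Γ A.subtype y →
        vStab Γ A.subtype (A.subtype g x) = vStab Γ A.subtype (A.subtype g y) := by
      intro g x y hxy
      ext h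
      rw [hmemiff g x h, hmemiff g y h, hxy]
    have hadjsame : ∀ x y, Γ.Adj x y → vStab Γ A.subtype x = vStab Γ A.subtype y := by
      intro x y hxy
      obtain ⟨g, hg⟩ := exists_map_pair hprim.1 huv hxy
      have hbase : vStab Γ A.subtype u = vStab Γ A.subtype v := hUeq.trans hVeq.symm
      rcases hg with ⟨h1, h2⟩ | ⟨h1, h2⟩
      · have := hkey g u v hbase; rwa [h1, h2] at this
      · have := hkey g u v hbase; rw [h1, h2] at this; exact this.symm
    have hwalk : ∀ x y : V, ∀ _ : Γ.Walk x y, vStab Γ A.subtype x = vStab Γ A.subtype y := by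
      intro x y p
      induction p with
      | nil => rfl
      | cons h q ih => exact (hadjsame _ _ h).trans ih
    apply hMne
    rw [Subgroup.eq_bot_iff_forall]
    intro m hm
    apply eq_one_of_forall_fixed hd hreg
    intro x y hxy
    have hmU : m ∈ vStab Γ A.subtype u := by rw [hUeq]; exact hm
    have hfixz : ∀ z : V, A.subtype m z = z := by
      intro z
      have hp := (hconn.preconnected u z).some
      have : m ∈ vStab Γ A.subtype z := by rw [← hwalk u z hp]; exact hmU
      exact this
    rw [Sym2.map_pair_eq, hfixz x, hfixz y]

end Part2
end EdgePrimitivePaper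

open EdgePrimitivePaper in
/-- If `Γ` is `G`-edge-primitive and `Γ ≇ K_{d,d}`, then `G` is
insoluble and every edge stabilizer `G_{{u,v}}` is nonabelian. -/
theorem stmt_9 {V : Type*} [Fintype V] (Γ : SimpleGraph V) [DecidableRel Γ.Adj]
    (d : ℕ) (hd : 3 ≤ d) (hconn : Γ.Connected) (hreg : Γ.IsRegularOfDegree d)
    (A : Subgroup (Γ ≃g Γ))
    (hprim : IsEdgePrimitive Γ A.subtype)
    (hnotbip : ¬ Nonempty (Γ ≃g completeBipartiteGraph (Fin d) (Fin d))) :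
    ¬ IsSolvable A ∧
      ∀ e ∈ Γ.edgeSet, ¬ (∀ x y : ↥(eStab Γ A.subtype e), x * y = y * x) := by
  exact ⟨EdgePrimitivePaper.not_solvable_main hd hconn hreg hprim hnotbip,
    EdgePrimitivePaper.estab_not_comm hd hconn hreg hprim hnotbip⟩
end

section
/- Let G be a finite primitive permutation group on a finite set Ω, let N be a nontrivial normal subgroup of G, and let α ∈ Ω. Then either N acts regularly on Ω, or the point stabilizer N_α is self-normalized in N (that is, the normalizer of N_α in N equals N_α). -/
open SimpleGraph

open MulAction

open EdgePrimitivePaper in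
/-- **Lemma 2.1, first part.** In a finite primitive permutation group `G`
on `Ω`, a nontrivial normal subgroup `N` is either regular, or its point stabilizer
`N_α` is self-normalized in `N`. -/
theorem stmt_11 {G : Type*} [Group G] [Finite G] {Ω : Type*} [Finite Ω]
    [MulAction G Ω] [FaithfulSMul G Ω]
    (htrans : MulAction.IsPretransitive G Ω)
    (hprim : ∀ β : Ω, IsCoatom (MulAction.stabilizer G β))
    (N : Subgroup G) (hN : N.Normal) (hNbot : N ≠ ⊥) (α : Ω) :
    ((∀ β γ : Ω, ∃ n ∈ N, n • β = γ) ∧ ∀ β : Ω, N ⊓ MulAction.stabilizer G β = ⊥) ∨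
      N ⊓ Subgroup.normalizer ((N ⊓ MulAction.stabilizer G α : Subgroup G) : Set G) = N ⊓ MulAction.stabilizer G α := by
  classical
  -- a normal subgroup contained in a point stabilizer is trivial
  have faith : ∀ β : Ω, ∀ K : Subgroup G, K.Normal → K ≤ stabilizer G β → K = ⊥ := by
    intro β K hK hle
    rw [eq_bot_iff]
    intro x hx
    have hfix : ∀ γ : Ω, x • γ = γ := by
      intro γ
      obtain ⟨g, hg⟩ := htrans.exists_smul_eq β γ
      have hmem : g⁻¹ * x * g ∈ K := hK.conj_mem' x hx g
      have h2 : (g⁻¹ * x * g) • β = β := hle hmem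
      calc x • γ = x • g • β := by rw [hg]
        _ = g • (g⁻¹ * x * g) • β := by
            simp [mul_smul]
        _ = g • β := by rw [h2]
        _ = γ := hg
    have hx1 : x = 1 := by
      apply eq_of_smul_eq_smul (α := Ω)
      intro γ; simp [hfix γ]
    simp [hx1, Subgroup.one_mem]
  have hsup : ∀ β : Ω, N ⊔ stabilizer G β = ⊤ := by
    intro β
    rcases (le_sup_right : stabilizer G β ≤ N ⊔ stabilizer G β).lt_or_eq with h | h
    · exact (hprim β).2 _ h
    · exfalso
      have hle : N ≤ stabilizer G β := by
        rw [h]; exact le_sup_left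
      exact hNbot (faith β N hN hle)
  have hNtrans : ∀ β γ : Ω, ∃ n ∈ N, n • β = γ := by
    intro β γ
    obtain ⟨g, hg⟩ := htrans.exists_smul_eq β γ
    have hg' : g ∈ ((N ⊔ stabilizer G β : Subgroup G) : Set G) := by
      rw [hsup β]; trivial
    rw [Subgroup.normal_mul] at hg'
    obtain ⟨n, hn, s, hs, rfl⟩ := hg'
    refine ⟨n, hn, ?_⟩
    have hs' : s • β = β := hs
    calc n • β = n • s • β := by rw [hs']
      _ = (n * s) • β := by rw [mul_smul]
      _ = γ := hg
  by_cases h0 : N ⊓ stabilizer G α = ⊥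
  · left
    refine ⟨hNtrans, fun β => ?_⟩
    obtain ⟨g, hg⟩ := htrans.exists_smul_eq α β
    rw [eq_bot_iff]
    intro x hx
    obtain ⟨hxN, hxs⟩ := Subgroup.mem_inf.mp hx
    have hxβ : x • β = β := hxs
    have hmem : g⁻¹ * x * g ∈ N ⊓ stabilizer G α := by
      refine Subgroup.mem_inf.mpr ⟨hN.conj_mem' x hxN g, ?_⟩
      show (g⁻¹ * x * g) • α = α
      have : x • g • α = g • α := by rw [hg]; exact hxβ
      calc (g⁻¹ * x * g) • α = g⁻¹ • x • g • α := by simp [mul_smul]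
        _ = g⁻¹ • g • α := by rw [this]
        _ = α := by simp
    rw [h0, Subgroup.mem_bot] at hmem
    have : x = 1 := by
      have := congrArg (fun y => g * y * g⁻¹) hmem
      group at this
      simpa using this
    simp [this, Subgroup.one_mem]
  · right
    set K := N ⊓ stabilizer G α with hK
    have hconj : ∀ g ∈ stabilizer G α, ∀ x ∈ K, g * x * g⁻¹ ∈ K := by
      intro g hg x hx
      obtain ⟨hxN, hxs⟩ := Subgroup.mem_inf.mp hx
      refine Subgroup.mem_inf.mpr ⟨hN.conj_mem x hxN g, ?_⟩
      show (g * x * g⁻¹) • α = α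
      have hgα : g • α = α := hg
      have hginv : g⁻¹ • α = α := by
        conv_lhs => rw [← hgα]
        simp
      have hxα : x • α = α := hxs
      calc (g * x * g⁻¹) • α = g • x • g⁻¹ • α := by simp [mul_smul]
        _ = α := by rw [hginv, hxα, hgα]
    have hstab_le : stabilizer G α ≤ Subgroup.normalizer (K : Set G) := by
      intro g hg
      rw [Subgroup.mem_normalizer_iff]
      intro x
      constructor
      · intro hx; exact hconj g hg x hx
      · intro hx
        have := hconj g⁻¹ ((stabilizer G α).inv_mem hg) _ hx
        group at this
        simpa using this
    rcases hstab_le.lt_or_eq with h | h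
    · exfalso
      have htop : Subgroup.normalizer (K : Set G) = ⊤ := (hprim α).2 _ h
      have hKnorm : K.Normal := Subgroup.normalizer_eq_top_iff.mp htop
      exact h0 (faith α K hKnorm inf_le_right)
    · rw [← h]
end

section
/- Let G be a finite transitive permutation group on a finite set Ω and suppose G has a transitive minimal normal subgroup N which is the internal direct product N = T_1 × ⋯ × T_k of nonabelian simple subgroups T_1, …, T_k. Then for each α ∈ Ω, the point stabilizer G_α acts transitively by conjugation on the set {(T_1)_α, …, (T_k)_α}; that is, for all i and j there exists g ∈ G_α with ((T_i)_α)^g = (T_j)_α. -/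
open SimpleGraph

section Stmt14Aux

variable {G : Type*} [Group G]

/-- Conjugate of a subgroup: `cjj g H = g H g⁻¹`. -/
def cjj (g : G) (H : Subgroup G) : Subgroup G := H.map (MulAut.conj g).toMonoidHom

lemma mem_cjj {g x : G} {H : Subgroup G} : x ∈ cjj g H ↔ g⁻¹ * x * g ∈ H := by
  rw [cjj, Subgroup.mem_map_equiv]
  rfl

lemma cjj_cjj (g h : G) (H : Subgroup G) : cjj g (cjj h H) = cjj (g * h) H := by
  ext x
  rw [mem_cjj, mem_cjj, mem_cjj]
  have e : h⁻¹ * (g⁻¹ * x * g) * h = (g * h)⁻¹ * x * (g * h) := by group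
  rw [e]

lemma cjj_one (H : Subgroup G) : cjj (1 : G) H = H := by
  ext x; rw [mem_cjj]; simp

lemma mem_cjj_self {g x : G} {H : Subgroup G} : g * x * g⁻¹ ∈ cjj g H ↔ x ∈ H := by
  rw [mem_cjj]
  constructor
  · intro hx; convert hx using 1; group
  · intro hx; convert hx using 1; group

lemma cjj_iSup {ι : Sort*} (g : G) (f : ι → Subgroup G) :
    cjj g (⨆ i, f i) = ⨆ i, cjj g (f i) :=
  (Subgroup.gc_map_comap _).l_iSup

end Stmt14Aux

open EdgePrimitivePaper in
/-- **Lemma 2.4.** If a finite transitive group `G` on `Ω` has a transitive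
minimal normal subgroup `N = T_1 × ⋯ × T_k` with the `T_i` nonabelian simple, then `G_α`
permutes the point stabilizers `(T_i)_α` transitively by conjugation. -/
theorem stmt_14 {G : Type*} [Group G] [Finite G] {Ω : Type*} [Finite Ω]
    [MulAction G Ω] [FaithfulSMul G Ω]
    (htrans : MulAction.IsPretransitive G Ω)
    (N : Subgroup G) (hmin : IsMinimalNormal N)
    (hNtrans : ∀ β γ : Ω, ∃ n ∈ N, n • β = γ)
    (k : ℕ) (hk : 1 ≤ k) (T : Fin k → Subgroup G)
    (hTle : ∀ i, T i ≤ N)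
    (hTsimple : ∀ i, IsSimpleGroup (T i) ∧ ¬ (∀ x y : ↥(T i), x * y = y * x))
    (hTcomm : ∀ i j, i ≠ j → ∀ x ∈ T i, ∀ y ∈ T j, x * y = y * x)
    (hTsup : (⨆ i, T i) = N)
    (hTind : ∀ i, T i ⊓ (⨆ j ∈ ({i}ᶜ : Set (Fin k)), T j) = ⊥)
    (α : Ω) :
    ∀ i j, ∃ g ∈ MulAction.stabilizer G α, ∀ x : G,
      g * x * g⁻¹ ∈ T i ⊓ MulAction.stabilizer G α ↔
        x ∈ T j ⊓ MulAction.stabilizer G α := by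
  have hNnormal : N.Normal := hmin.1
  -- each `T i` is nontrivial
  have hTne : ∀ i, T i ≠ ⊥ := fun i =>
    (Subgroup.nontrivial_iff_ne_bot (T i)).mp (hTsimple i).1.toNontrivial
  -- each `T i` is normal in `N`
  have hTnormN : ∀ i, ∀ n ∈ N, ∀ t ∈ T i, n * t * n⁻¹ ∈ T i := by
    intro i
    have hle : N ≤ Subgroup.normalizer (T i : Set G) := by
      rw [← hTsup]
      apply iSup_le
      intro j
      by_cases hij : j = i
      · subst hij; exact Subgroup.le_normalizer
      · intro x hx
        rw [Subgroup.mem_normalizer_iff]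
        intro t
        constructor
        · intro ht
          have hc := hTcomm j i hij x hx t ht
          have e : x * t * x⁻¹ = t := by rw [hc]; group
          rw [e]; exact ht
        · intro ht
          have hc := hTcomm j i hij x hx _ ht
          have e : t = x * t * x⁻¹ := by
            calc t = x⁻¹ * ((x * t * x⁻¹) * x) := by group
              _ = x⁻¹ * (x * (x * t * x⁻¹)) := by rw [← hc]
              _ = x * t * x⁻¹ := by group
          rw [e]; exact ht
    intro n hn t ht
    exact ((Subgroup.mem_normalizer_iff.mp (hle hn)) t).mp ht
  -- conjugation by elements of `N` fixes each `T i`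
  have hcjjfix : ∀ i, ∀ n ∈ N, cjj n (T i) = T i := by
    intro i n hn
    ext x
    rw [mem_cjj]
    constructor
    · intro hx
      have h1 := hTnormN i n hn _ hx
      have e : n * (n⁻¹ * x * n) * n⁻¹ = x := by group
      rwa [e] at h1
    · intro hx
      simpa using hTnormN i n⁻¹ (inv_mem hn) x hx
  -- conjugates of the `T i` are normal in `N`
  have hconjnorm : ∀ (g : G) (i : Fin k), ∀ n ∈ N, ∀ m ∈ cjj g (T i),
      n * m * n⁻¹ ∈ cjj g (T i) := by
    intro g i n hn m hm
    rw [mem_cjj] at hm ⊢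
    have hn' : g⁻¹ * n * g ∈ N := by
      simpa using hNnormal.conj_mem n hn g⁻¹
    have h1 := hTnormN i _ hn' _ hm
    have e : g⁻¹ * n * g * (g⁻¹ * m * g) * (g⁻¹ * n * g)⁻¹ = g⁻¹ * (n * m * n⁻¹) * g := by
      group
    rwa [e] at h1
  -- a nontrivial subgroup of `T i` which is normal in `N` equals `T i`
  have hD : ∀ (i : Fin k) (K : Subgroup G), (∀ n ∈ N, ∀ x ∈ K, n * x * n⁻¹ ∈ K) →
      K ≤ T i → K ≠ ⊥ → K = T i := by
    intro i K hKnorm hKle hKne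
    have hsimp := (hTsimple i).1
    have hnormal : (K.subgroupOf (T i)).Normal := by
      constructor
      intro x hx n
      rw [Subgroup.mem_subgroupOf] at hx ⊢
      simpa using hKnorm (n : G) (hTle i n.2) (x : G) hx
    rcases hsimp.eq_bot_or_eq_top_of_normal _ hnormal with h | h
    · exfalso
      apply hKne
      rw [eq_bot_iff]
      intro x hx
      have hxT : x ∈ T i := hKle hx
      have hmem : (⟨x, hxT⟩ : ↥(T i)) ∈ K.subgroupOf (T i) := Subgroup.mem_subgroupOf.mpr hx
      rw [h, Subgroup.mem_bot] at hmem
      rw [Subgroup.mem_bot]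
      simpa using Subtype.ext_iff.mp hmem
    · rw [Subgroup.subgroupOf_eq_top] at h
      exact le_antisymm hKle h
  -- key step: conjugates of the factors are factors
  have key : ∀ (g : G) (i : Fin k), ∃ j, cjj g (T i) = T j := by
    intro g i
    set M := cjj g (T i) with hM
    have hMN : M ≤ N := by
      intro x hx
      rw [hM, mem_cjj] at hx
      have h1 := hNnormal.conj_mem _ (hTle i hx) g
      have e : g * (g⁻¹ * x * g) * g⁻¹ = x := by group
      rwa [e] at h1
    have hMnorm : ∀ n ∈ N, ∀ m ∈ M, n * m * n⁻¹ ∈ M := hconjnorm g i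
    by_cases hall : ∀ j, ∀ x, x ∈ M → x ∈ T j → x = 1
    · exfalso
      -- every element of `M` centralizes `N`
      have hcent : ∀ m ∈ M, ∀ n ∈ N, m * n = n * m := by
        intro m hm n hn
        rw [← hTsup] at hn
        refine Subgroup.iSup_induction T (C := fun w => m * w = w * m) hn ?_ (by simp) ?_
        · intro j x hx
          have h1 : m * x * m⁻¹ ∈ T j := hTnormN j m (hMN hm) x hx
          have h2 : m * x * m⁻¹ * x⁻¹ ∈ T j := mul_mem h1 (inv_mem hx)
          have h3 : m * x * m⁻¹ * x⁻¹ ∈ M := by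
            have h4 : x * m⁻¹ * x⁻¹ ∈ M := hMnorm x (hTle j hx) m⁻¹ (inv_mem hm)
            have e : m * (x * m⁻¹ * x⁻¹) = m * x * m⁻¹ * x⁻¹ := by group
            rw [← e]
            exact mul_mem hm h4
          have h5 := hall j _ h3 h2
          have e : m * x = m * x * m⁻¹ * x⁻¹ * (x * m) := by group
          rw [e, h5, one_mul]
        · intro x y hx hy
          calc m * (x * y) = m * x * y := by rw [mul_assoc]
            _ = x * m * y := by rw [hx]
            _ = x * (m * y) := by rw [mul_assoc]
            _ = x * (y * m) := by rw [hy]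
            _ = x * y * m := by rw [mul_assoc]
      obtain ⟨a, b, hab⟩ : ∃ a b : ↥(T i), a * b ≠ b * a := by
        by_contra hcon
        push_neg at hcon
        exact (hTsimple i).2 hcon
      have ha : g * (a : G) * g⁻¹ ∈ M := by rw [hM]; exact mem_cjj_self.mpr a.2
      have hb : g * (b : G) * g⁻¹ ∈ N := hMN (by rw [hM]; exact mem_cjj_self.mpr b.2)
      have hc := hcent _ ha _ hb
      have e1 : g * (a : G) * g⁻¹ * (g * (b : G) * g⁻¹) = g * ((a : G) * b) * g⁻¹ := by group
      have e2 : g * (b : G) * g⁻¹ * (g * (a : G) * g⁻¹) = g * ((b : G) * a) * g⁻¹ := by group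
      rw [e1, e2] at hc
      have e3 : (a : G) * b = (b : G) * a := mul_left_cancel (mul_right_cancel hc)
      apply hab
      apply Subtype.ext
      push_cast
      exact e3
    · push_neg at hall
      obtain ⟨j, x0, hx0M, hx0T, hx0ne⟩ := hall
      -- `M ⊓ T j` is normal in `N`, nontrivial, inside `T j`, hence equals `T j`
      have hKnorm : ∀ n ∈ N, ∀ x ∈ M ⊓ T j, n * x * n⁻¹ ∈ M ⊓ T j := by
        intro n hn x hx
        rw [Subgroup.mem_inf] at hx ⊢
        exact ⟨hMnorm n hn x hx.1, hTnormN j n hn x hx.2⟩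
      have hKne : M ⊓ T j ≠ ⊥ := by
        intro hb
        apply hx0ne
        have hx0 : x0 ∈ M ⊓ T j := Subgroup.mem_inf.mpr ⟨hx0M, hx0T⟩
        rw [hb, Subgroup.mem_bot] at hx0
        exact hx0
      have hKj : M ⊓ T j = T j := hD j _ hKnorm inf_le_right hKne
      have hTjM : T j ≤ M := by rw [← hKj]; exact inf_le_left
      -- conjugate back by `g⁻¹`
      have hMeq : cjj g⁻¹ M = T i := by rw [hM, cjj_cjj, inv_mul_cancel, cjj_one]
      have hK'le : cjj g⁻¹ (T j) ≤ T i := by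
        rw [← hMeq]
        intro x hx
        rw [mem_cjj] at hx ⊢
        exact hTjM hx
      have hK'ne : cjj g⁻¹ (T j) ≠ ⊥ := by
        intro hb
        apply hTne j
        rw [eq_bot_iff]
        intro t ht
        have e : (g⁻¹)⁻¹ * (g⁻¹ * t * g) * g⁻¹ = t := by group
        have hx : g⁻¹ * t * g ∈ cjj g⁻¹ (T j) := by rw [mem_cjj, e]; exact ht
        rw [hb, Subgroup.mem_bot] at hx
        rw [Subgroup.mem_bot]
        have e2 : t = g * (g⁻¹ * t * g) * g⁻¹ := by group
        rw [e2, hx]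
        group
      have hK'eq : cjj g⁻¹ (T j) = T i := hD i _ (hconjnorm g⁻¹ j) hK'le hK'ne
      refine ⟨j, ?_⟩
      rw [hM, ← hK'eq, cjj_cjj, mul_inv_cancel, cjj_one]
  -- transitivity of the conjugation action on the set of factors
  have htrans' : ∀ i j, ∃ g : G, cjj g (T i) = T j := by
    intro i j
    set O : Set (Fin k) := {l | ∃ g : G, cjj g (T i) = T l} with hO
    have hiO : i ∈ O := ⟨1, cjj_one _⟩
    set M : Subgroup G := ⨆ l : O, T (l : Fin k) with hMdef
    have hMclosed : ∀ g : G, cjj g M ≤ M := by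
      intro g
      rw [hMdef, cjj_iSup]
      apply iSup_le
      intro l
      obtain ⟨m, hm⟩ := key g (l : Fin k)
      rw [hm]
      have hmO : m ∈ O := by
        obtain ⟨g', hg'⟩ := l.2
        exact ⟨g * g', by rw [← cjj_cjj, hg', hm]⟩
      exact le_iSup (fun l : O => T (l : Fin k)) ⟨m, hmO⟩
    have hMnormal : M.Normal := by
      constructor
      intro x hx g
      exact hMclosed g (mem_cjj_self.mpr hx)
    have hMne : M ≠ ⊥ := by
      intro hb
      apply hTne i
      rw [eq_bot_iff, ← hb]
      exact le_iSup (fun l : O => T (l : Fin k)) ⟨i, hiO⟩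
    have hMleN : M ≤ N := iSup_le fun l => hTle _
    have hMN : M = N := hmin.2.2 M hMnormal hMne hMleN
    have hjO : j ∈ O := by
      by_contra hj
      have hsub : M ≤ ⨆ l ∈ ({j}ᶜ : Set (Fin k)), T l := by
        apply iSup_le
        intro l
        have hlj : (l : Fin k) ∈ ({j}ᶜ : Set (Fin k)) := fun h => hj (h ▸ l.2)
        exact le_iSup₂ (f := fun (l : Fin k) (_ : l ∈ ({j}ᶜ : Set (Fin k))) => T l)
          (l : Fin k) hlj
      have h1 : T j ≤ M := by rw [hMN]; exact hTle j
      have h2 := hTind j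
      rw [inf_eq_left.mpr (le_trans h1 hsub)] at h2
      exact hTne j h2
    exact hjO
  -- conclude, using transitivity of `N` to move the conjugating element into `G_α`
  intro i j
  obtain ⟨g, hg⟩ := htrans' j i
  obtain ⟨n, hnN, hn⟩ := hNtrans (g • α) α
  have hstab : n * g ∈ MulAction.stabilizer G α := by
    rw [MulAction.mem_stabilizer_iff, mul_smul]
    exact hn
  refine ⟨n * g, hstab, ?_⟩
  intro x
  have hcj : cjj (n * g) (T j) = T i := by
    rw [← cjj_cjj, hg, hcjjfix i n hnN]
  simp only [Subgroup.mem_inf]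
  constructor
  · rintro ⟨h1, h2⟩
    constructor
    · rw [← hcj] at h1
      rwa [mem_cjj_self] at h1
    · have h3 : (n * g)⁻¹ * (n * g * x * (n * g)⁻¹) * (n * g) ∈ MulAction.stabilizer G α :=
        mul_mem (mul_mem (inv_mem hstab) h2) hstab
      have e : (n * g)⁻¹ * (n * g * x * (n * g)⁻¹) * (n * g) = x := by group
      rwa [e] at h3
  · rintro ⟨h1, h2⟩
    exact ⟨by rw [← hcj]; exact mem_cjj_self.mpr h1,
      mul_mem (mul_mem hstab h2) (inv_mem hstab)⟩
end
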